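/- arXiv:2001.09225 — 11 statements merged into one kernel-verified Lean document; each statement's English description precedes it below -/
import Mathlib

section
/- Let (Ω, 𝔽, ℙ) be a probability space, 𝒳 and 𝒴 measurable spaces, X : Ω → 𝒳 and Y : Ω → 𝒴 random elements (X plays the role of the observed data Y^n and Y that of the future observation Y_{n+1}). Let π : 𝒴 × 𝒳 → [0,1] be a measurable function satisfying ℙ(π(Y, X) ≤ α) ≤ α for every α ∈ [0,1]. Define the consonant upper predictive probability Π̄_x(A) = sup_{ỹ ∈ A} π(ỹ, x) for A ⊆ 𝒴. Then for every subset A ⊆ 𝒴 and every α ∈ [0,1], the event {Π̄_X(A) ≤ α and Y ∈ A} is contained in the measurable event {π(Y, X) ≤ α}, and consequently its outer probability satisfies ℙ*({Π̄_X(A) ≤ α, Y ∈ A}) ≤ α. (Theorem 1: strong prediction validity of the consonant plausibility predictor.) -/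
open MeasureTheory

/-- **Theorem 1 (strong prediction validity of the consonant plausibility predictor).**
If the plausibility contour `π` is calibrated, i.e. `Pr(π(Y,X) ≤ α) ≤ α` for all `α ∈ [0,1]`,
then for every assertion `A` and `α ∈ [0,1]`, the event
`{Π̄_X(A) ≤ α, Y ∈ A}` (with `Π̄_x(A) = sup_{yt ∈ A} π(yt, x)`) is contained in the event
`{π(Y,X) ≤ α}`, and hence its outer probability (a measure applied to an arbitrary set in
Mathlib is the induced outer measure) is at most `α`. -/
theorem stmt0
    {Ω 𝒳 𝒴 : Type*} [MeasurableSpace Ω] [MeasurableSpace 𝒳] [MeasurableSpace 𝒴]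
    (Pr : Measure Ω) [IsProbabilityMeasure Pr]
    (X : Ω → 𝒳) (Y : Ω → 𝒴) (hX : Measurable X) (hY : Measurable Y)
    (π : 𝒴 → 𝒳 → ℝ) (hπ : Measurable fun p : 𝒴 × 𝒳 => π p.1 p.2)
    (hπ01 : ∀ y x, π y x ∈ Set.Icc (0:ℝ) 1)
    (hcal : ∀ α ∈ Set.Icc (0:ℝ) 1, Pr {ω | π (Y ω) (X ω) ≤ α} ≤ ENNReal.ofReal α)
    (A : Set 𝒴) (α : ℝ) (hα : α ∈ Set.Icc (0:ℝ) 1) :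
    {ω | (⨆ yt : A, π (yt : 𝒴) (X ω)) ≤ α ∧ Y ω ∈ A} ⊆ {ω | π (Y ω) (X ω) ≤ α} ∧
      Pr {ω | (⨆ yt : A, π (yt : 𝒴) (X ω)) ≤ α ∧ Y ω ∈ A} ≤ ENNReal.ofReal α := by
  have hsub : {ω | (⨆ yt : A, π (yt : 𝒴) (X ω)) ≤ α ∧ Y ω ∈ A} ⊆
      {ω | π (Y ω) (X ω) ≤ α} := by
    intro ω ⟨hsup, hmem⟩
    have hbdd : BddAbove (Set.range fun yt : A => π (yt : 𝒴) (X ω)) :=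
      ⟨1, by rintro _ ⟨yt, rfl⟩; exact (hπ01 _ _).2⟩
    exact le_trans (le_ciSup hbdd (⟨Y ω, hmem⟩ : A)) hsup
  exact ⟨hsub, le_trans (measure_mono hsub) (hcal α hα)⟩
end

section
/- Let (Ω, 𝔽, ℙ) be a probability space, 𝒳 and 𝒴 measurable spaces, X : Ω → 𝒳 and Y : Ω → 𝒴 random elements, and let π : 𝒴 × 𝒳 → [0,1] be measurable with ℙ(π(Y, X) ≤ α) ≤ α for every α ∈ [0,1]. Define Π̄_x(A) = sup_{ỹ ∈ A} π(ỹ, x) and the dual lower predictive probability Π̲_x(A) = 1 − Π̄_x(Aᶜ). Then for every subset A ⊆ 𝒴 and every α ∈ [0,1], the outer probability of the event {Π̲_X(A) ≥ 1 − α and Y ∉ A} is at most α. (Dual form of strong validity: large lower probability is rarely assigned to false assertions.) -/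
open MeasureTheory

/-- **Dual form of strong validity.** With a calibrated plausibility contour `π`,
the consonant upper predictive probability `Π̄_x(A) = sup_{yt ∈ A} π(yt, x)` and its
conjugate lower probability `Π̲_x(A) = 1 - Π̄_x(Aᶜ)`, the outer probability of the event
`{Π̲_X(A) ≥ 1 - α, Y ∉ A}` is at most `α`, for every `A ⊆ 𝒴` and `α ∈ [0,1]`. -/
theorem stmt1
    {Ω 𝒳 𝒴 : Type*} [MeasurableSpace Ω] [MeasurableSpace 𝒳] [MeasurableSpace 𝒴]
    (Pr : Measure Ω) [IsProbabilityMeasure Pr]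
    (X : Ω → 𝒳) (Y : Ω → 𝒴) (hX : Measurable X) (hY : Measurable Y)
    (π : 𝒴 → 𝒳 → ℝ) (hπ : Measurable fun p : 𝒴 × 𝒳 => π p.1 p.2)
    (hπ01 : ∀ y x, π y x ∈ Set.Icc (0:ℝ) 1)
    (hcal : ∀ α ∈ Set.Icc (0:ℝ) 1, Pr {ω | π (Y ω) (X ω) ≤ α} ≤ ENNReal.ofReal α)
    (A : Set 𝒴) (α : ℝ) (hα : α ∈ Set.Icc (0:ℝ) 1) :
    Pr {ω | 1 - α ≤ 1 - (⨆ yt : (Aᶜ : Set 𝒴), π (yt : 𝒴) (X ω)) ∧ Y ω ∉ A}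
      ≤ ENNReal.ofReal α := by
  refine le_trans (measure_mono ?_) (hcal α hα)
  rintro ω ⟨h1, h2⟩
  have hsup : (⨆ yt : (Aᶜ : Set 𝒴), π (yt : 𝒴) (X ω)) ≤ α := by linarith
  refine le_trans ?_ hsup
  have hbdd : BddAbove (Set.range fun yt : (Aᶜ : Set 𝒴) => π (yt : 𝒴) (X ω)) :=
    ⟨1, by rintro _ ⟨yt, rfl⟩; exact (hπ01 _ _).2⟩
  exact le_ciSup hbdd ⟨Y ω, h2⟩
end

section
/- Let (Ω, 𝔽, ℙ) be a probability space, 𝒳 and 𝒴 measurable spaces, X : Ω → 𝒳 and Y : Ω → 𝒴 random elements, and for each x ∈ 𝒳 let Π̄_x be a [0,1]-valued set function on 𝒴 (an upper probabilistic predictor) such that x ↦ Π̄_x(A) is measurable for the fixed measurable set A ⊆ 𝒴. If sup_{x ∈ 𝒳} Π̄_x(A) < ℙ(Y ∈ A), then strong prediction validity fails at A: there exists α ∈ [0,1] with ℙ(Π̄_X(A) ≤ α and Y ∈ A) > α. In fact, any α strictly between sup_x Π̄_x(A) and ℙ(Y ∈ A) works, since then {Π̄_X(A) ≤ α, Y ∈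 A} = {Y ∈ A}. (Proposition 1: sure loss precludes strong validity.) -/
open MeasureTheory

/-- **Proposition 1 (sure loss precludes strong validity).** If the upper probabilistic
predictor `Pbar` satisfies `sup_x Pbar x A < Pr(Y ∈ A)`, then strong validity fails at `A`:
any `α` strictly between `sup_x Pbar x A` and `Pr(Y ∈ A)` satisfies
`{Π̄_X(A) ≤ α, Y ∈ A} = {Y ∈ A}` and `Pr(Π̄_X(A) ≤ α, Y ∈ A) > α`; in particular there
exists `α ∈ [0,1]` with `Pr(Π̄_X(A) ≤ α, Y ∈ A) > α`. -/
theorem stmt2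
    {Ω 𝒳 𝒴 : Type*} [MeasurableSpace Ω] [MeasurableSpace 𝒳] [MeasurableSpace 𝒴]
    (Pr : Measure Ω) [IsProbabilityMeasure Pr]
    (X : Ω → 𝒳) (Y : Ω → 𝒴) (hX : Measurable X) (hY : Measurable Y)
    (Pbar : 𝒳 → Set 𝒴 → ℝ) (A : Set 𝒴) (hA : MeasurableSet A)
    (hmeas : Measurable fun x => Pbar x A)
    (h01 : ∀ x, Pbar x A ∈ Set.Icc (0:ℝ) 1)
    (hsl : (⨆ x, Pbar x A) < (Pr {ω | Y ω ∈ A}).toReal) :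
    (∀ α : ℝ, (⨆ x, Pbar x A) < α → α < (Pr {ω | Y ω ∈ A}).toReal →
        ({ω | Pbar (X ω) A ≤ α ∧ Y ω ∈ A} = {ω | Y ω ∈ A} ∧
          ENNReal.ofReal α < Pr {ω | Pbar (X ω) A ≤ α ∧ Y ω ∈ A})) ∧
      ∃ α ∈ Set.Icc (0:ℝ) 1,
        ENNReal.ofReal α < Pr {ω | Pbar (X ω) A ≤ α ∧ Y ω ∈ A} := by
  have hne : Pr {ω | Y ω ∈ A} ≠ ⊤ := measure_ne_top _ _
  have hsup0 : 0 ≤ ⨆ x, Pbar x A := Real.iSup_nonneg fun x => (h01 x).1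
  have hbdd : BddAbove (Set.range fun x => Pbar x A) :=
    ⟨1, by rintro _ ⟨x, rfl⟩; exact (h01 x).2⟩
  have key : ∀ α : ℝ, (⨆ x, Pbar x A) < α → α < (Pr {ω | Y ω ∈ A}).toReal →
      ({ω | Pbar (X ω) A ≤ α ∧ Y ω ∈ A} = {ω | Y ω ∈ A} ∧
        ENNReal.ofReal α < Pr {ω | Pbar (X ω) A ≤ α ∧ Y ω ∈ A}) := by
    intro α h1 h2
    have hset : {ω | Pbar (X ω) A ≤ α ∧ Y ω ∈ A} = {ω | Y ω ∈ A} := by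
      ext ω
      simp only [Set.mem_setOf_eq, and_iff_right_iff_imp]
      intro _
      exact le_of_lt (lt_of_le_of_lt (le_ciSup hbdd (X ω)) h1)
    refine ⟨hset, ?_⟩
    rw [hset]
    exact (ENNReal.ofReal_lt_iff_lt_toReal (le_trans hsup0 h1.le) hne).2 h2
  refine ⟨key, ?_⟩
  set s := ⨆ x, Pbar x A
  set t := (Pr {ω | Y ω ∈ A}).toReal
  have ht1 : t ≤ 1 := by
    have := prob_le_one (μ := Pr) (s := {ω | Y ω ∈ A})
    simpa [t] using ENNReal.toReal_mono (by simp) this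
  refine ⟨(s + t) / 2, ⟨by linarith, by linarith⟩, (key _ (by linarith) (by linarith)).2⟩
end

section
/- Let (Ω, 𝔽, ℙ) be a probability space, 𝒳 and 𝒴 measurable spaces, X : Ω → 𝒳 and Y : Ω → 𝒴 random elements, and let κ : 𝒳 → Measures(𝒴) be a regular conditional distribution of Y given X (so that for every measurable A ⊆ 𝒴, E[1_{Y ∈ A} | σ(X)] = κ(X)(A) ℙ-a.s.). Let Π̄ : 𝒳 × (measurable sets of 𝒴) → [0,1] be such that x ↦ Π̄_x(A) is measurable and Π̄_x(A) ≥ κ(x)(A) for (ℙ ∘ X⁻¹)-a.e. x and every measurable A. Then the predictor is strongly valid: for every measurable A ⊆ 𝒴 and every α ∈ [0,1], ℙ(Π̄_X(A) ≤ α and Y ∈ A) ≤ α. (Proposition 2: a predictor dominating the true conditional distribution is strongly valid.) -/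
open MeasureTheory ProbabilityTheory

/-- **Proposition 2 (a predictor dominating the true conditional distribution is strongly
valid).** Let `κ` be a regular conditional distribution of `Y` given `X`, i.e. a Markov
kernel with `E[1_{Y ∈ A} | σ(X)] = κ(X)(A)` a.s. for every measurable `A`.  If the
predictor `Pbar` (measurable in `x`, `[0,1]`-valued) dominates `κ`, in the sense that
`Pbar x A ≥ κ x A` for `(Pr ∘ X⁻¹)`-a.e. `x` and every measurable `A`, then it is strongly
valid: `Pr(Pbar (X) A ≤ α and Y ∈ A) ≤ α` for all measurable `A` and `α ∈ [0,1]`. -/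
theorem stmt3
    {Ω 𝒳 𝒴 : Type*} [MeasurableSpace Ω] [MeasurableSpace 𝒳] [MeasurableSpace 𝒴]
    (Pr : Measure Ω) [IsProbabilityMeasure Pr]
    (X : Ω → 𝒳) (Y : Ω → 𝒴) (hX : Measurable X) (hY : Measurable Y)
    (κ : Kernel 𝒳 𝒴) [IsMarkovKernel κ]
    (hκ : ∀ A : Set 𝒴, MeasurableSet A →
      (Pr[fun ω => Set.indicator A (fun _ => (1:ℝ)) (Y ω) |
          MeasurableSpace.comap X inferInstance])
        =ᵐ[Pr] fun ω => (κ (X ω) A).toReal)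
    (Pbar : 𝒳 → Set 𝒴 → ℝ)
    (hmeas : ∀ A : Set 𝒴, MeasurableSet A → Measurable fun x => Pbar x A)
    (h01 : ∀ x A, Pbar x A ∈ Set.Icc (0:ℝ) 1)
    (hdom : ∀ A : Set 𝒴, MeasurableSet A →
      ∀ᵐ x ∂(Pr.map X), κ x A ≤ ENNReal.ofReal (Pbar x A)) :
    ∀ A : Set 𝒴, MeasurableSet A → ∀ α ∈ Set.Icc (0:ℝ) 1,
      Pr {ω | Pbar (X ω) A ≤ α ∧ Y ω ∈ A} ≤ ENNReal.ofReal α := by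
  intro A hA α hα
  have hm : MeasurableSpace.comap X inferInstance ≤ ‹MeasurableSpace Ω› := hX.comap_le
  have hB : MeasurableSet {x : 𝒳 | Pbar x A ≤ α} :=
    measurableSet_le (hmeas A hA) measurable_const
  set s : Set Ω := X ⁻¹' {x : 𝒳 | Pbar x A ≤ α} with hs_def
  have hs : MeasurableSet[MeasurableSpace.comap X inferInstance] s := ⟨_, hB, rfl⟩
  have hsΩ : MeasurableSet s := hX hB
  have hevent : {ω | Pbar (X ω) A ≤ α ∧ Y ω ∈ A} = s ∩ Y ⁻¹' A := by
    ext ω; simp [hs_def, Set.mem_inter_iff]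
  have hf_eq : (fun ω => Set.indicator A (fun _ => (1:ℝ)) (Y ω))
      = Set.indicator (Y ⁻¹' A) (fun _ => (1:ℝ)) := by
    ext ω; by_cases h : Y ω ∈ A <;> simp [h]
  have hf_int : Integrable (fun ω => Set.indicator A (fun _ => (1:ℝ)) (Y ω)) Pr := by
    rw [hf_eq]; exact (integrable_const 1).indicator (hY hA)
  have h1 : ∫ ω in s, Set.indicator A (fun _ => (1:ℝ)) (Y ω) ∂Pr
      = (Pr (s ∩ Y ⁻¹' A)).toReal := by
    rw [hf_eq, setIntegral_indicator (hY hA), setIntegral_const, smul_eq_mul, mul_one, measureReal_def]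
  have h2 : ∫ ω in s, Set.indicator A (fun _ => (1:ℝ)) (Y ω) ∂Pr
      = ∫ ω in s, (κ (X ω) A).toReal ∂Pr := by
    rw [← setIntegral_condExp hm hf_int hs]
    exact setIntegral_congr_ae hsΩ ((hκ A hA).mono fun ω h _ => h)
  have hκ_int : Integrable (fun ω => (κ (X ω) A).toReal) Pr :=
    integrable_condExp.congr (hκ A hA)
  have hdom' : ∀ᵐ ω ∂Pr, κ (X ω) A ≤ ENNReal.ofReal (Pbar (X ω) A) :=
    ae_of_ae_map hX.aemeasurable (hdom A hA)
  have h3 : ∫ ω in s, (κ (X ω) A).toReal ∂Pr ≤ ∫ ω in s, α ∂Pr := by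
    refine setIntegral_mono_ae_restrict hκ_int.restrict (integrable_const α).restrict ?_
    filter_upwards [ae_restrict_of_ae hdom', ae_restrict_mem hsΩ] with ω h hω
    have h1 : (κ (X ω) A).toReal ≤ Pbar (X ω) A :=
      ENNReal.toReal_le_of_le_ofReal (h01 (X ω) A).1 h
    exact h1.trans hω
  have h4 : ∫ ω in s, α ∂Pr ≤ α := by
    rw [setIntegral_const, smul_eq_mul]
    calc (Pr s).toReal * α ≤ 1 * α := by
          apply mul_le_mul_of_nonneg_right _ hα.1
          exact ENNReal.toReal_le_of_le_ofReal one_pos.le (by simpa using prob_le_one)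
      _ = α := one_mul α
  have hle : (Pr {ω | Pbar (X ω) A ≤ α ∧ Y ω ∈ A}).toReal ≤ α := by
    rw [hevent, ← h1, h2]; exact h3.trans h4
  calc Pr {ω | Pbar (X ω) A ≤ α ∧ Y ω ∈ A}
      = ENNReal.ofReal (Pr {ω | Pbar (X ω) A ≤ α ∧ Y ω ∈ A}).toReal :=
        (ENNReal.ofReal_toReal (measure_ne_top _ _)).symm
    _ ≤ ENNReal.ofReal α := ENNReal.ofReal_le_ofReal hle
end

section
/- Fix n ∈ ℕ and let V be uniformly distributed on 𝓘_{n+1} = {1, …, n+1}. Let γ' : 𝓘_{n+1} → {0, 1/(n+1), 2/(n+1), …, 1} be a grid-valued function satisfying γ'(v) ≤ 1 − (v−1)/(n+1) for all v ∈ 𝓘_{n+1} and γ'(v₀) < 1 − (v₀−1)/(n+1) for some v₀ ∈ 𝓘_{n+1}. Then γ' is not valid: there exists α ∈ [0,1] such that ℙ( γ'(V) ≤ k_n(α) ) > α, where k_n(α) = ⌊(n+1)α⌋/(n+1). In particular, one may take α = (n+1−v₀)/(n+1). (No random set whose contour is strictly smaller than that of S = {1,…,Ṽ} can be valid.) -/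
open MeasureTheory
open scoped ENNReal

lemma stmt7_key (n : ℕ) (γ' : ℕ → ℝ)
    (hgrid : ∀ v ∈ Finset.Icc 1 (n+1),
      ∃ j ∈ Finset.range (n+2), γ' v = (j:ℝ)/((n:ℝ)+1))
    (hle : ∀ v ∈ Finset.Icc 1 (n+1), γ' v ≤ 1 - ((v:ℝ) - 1)/((n:ℝ)+1))
    (v₀ : ℕ) (hv₀ : v₀ ∈ Finset.Icc 1 (n+1))
    (hlt : γ' v₀ < 1 - ((v₀:ℝ) - 1)/((n:ℝ)+1)) :
    ENNReal.ofReal (((n:ℝ) + 1 - (v₀:ℝ))/((n:ℝ)+1)) <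
      (PMF.uniformOfFinset (Finset.Icc 1 (n+1))
          (Finset.nonempty_Icc.mpr (Nat.le_add_left 1 n))).toMeasure
        {v : ℕ | γ' v ≤
          (⌊((n:ℝ)+1) * (((n:ℝ) + 1 - (v₀:ℝ))/((n:ℝ)+1))⌋ : ℝ)/((n:ℝ)+1)} := by
  obtain ⟨hv₀1, hv₀2⟩ := Finset.mem_Icc.mp hv₀
  have hn1 : (0:ℝ) < (n:ℝ)+1 := by positivity
  have hcast : ((n + 1 - v₀ : ℕ) : ℝ) = (n:ℝ) + 1 - (v₀:ℝ) := by
    push_cast [Nat.cast_sub (by omega : v₀ ≤ n + 1)]; ring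
  have hfloor : (⌊((n:ℝ)+1) * (((n:ℝ) + 1 - (v₀:ℝ))/((n:ℝ)+1))⌋ : ℝ)
      = ((n + 1 - v₀ : ℕ) : ℝ) := by
    rw [mul_div_cancel₀ _ (ne_of_gt hn1), ← hcast, Int.floor_natCast, Int.cast_natCast]
  have hsub : (↑(Finset.Icc v₀ (n+1)) : Set ℕ) ⊆
      {v : ℕ | γ' v ≤
        (⌊((n:ℝ)+1) * (((n:ℝ) + 1 - (v₀:ℝ))/((n:ℝ)+1))⌋ : ℝ)/((n:ℝ)+1)} := by
    intro v hv
    simp only [Finset.coe_Icc, Set.mem_Icc] at hv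
    obtain ⟨hv1, hv2⟩ := hv
    have hvmem : v ∈ Finset.Icc 1 (n+1) := Finset.mem_Icc.mpr ⟨by omega, hv2⟩
    obtain ⟨j, hj, hγ⟩ := hgrid v hvmem
    simp only [Set.mem_setOf_eq, hfloor, hγ, hcast]
    have hjle : j ≤ n + 1 - v₀ := by
      rcases eq_or_lt_of_le hv1 with heq | hgt
      · rw [heq] at hlt
        rw [hγ] at hlt
        have h1 : (j:ℝ) < (1 - ((v:ℝ)-1)/((n:ℝ)+1)) * ((n:ℝ)+1) :=
          (div_lt_iff₀ hn1).mp hlt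
        have h2 : (1 - ((v:ℝ)-1)/((n:ℝ)+1)) * ((n:ℝ)+1) = (n:ℝ)+2-(v:ℝ) := by
          field_simp; ring
        have hjv : (j:ℝ) + (v:ℝ) < (n:ℝ)+2 := by linarith
        have : j + v < n + 2 := by exact_mod_cast hjv
        omega
      · have h := hle v hvmem
        rw [hγ] at h
        have h1 : (j:ℝ) ≤ (1 - ((v:ℝ)-1)/((n:ℝ)+1)) * ((n:ℝ)+1) :=
          (div_le_iff₀ hn1).mp h
        have h2 : (1 - ((v:ℝ)-1)/((n:ℝ)+1)) * ((n:ℝ)+1) = (n:ℝ)+2-(v:ℝ) := by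
          field_simp; ring
        have hjv : (j:ℝ) + (v:ℝ) ≤ (n:ℝ)+2 := by linarith
        have : j + v ≤ n + 2 := by exact_mod_cast hjv
        omega
    have : (j:ℝ) ≤ (n:ℝ) + 1 - (v₀:ℝ) := by
      rw [← hcast]; exact_mod_cast hjle
    exact div_le_div_of_nonneg_right this hn1.le
  calc ENNReal.ofReal (((n:ℝ) + 1 - (v₀:ℝ))/((n:ℝ)+1))
      < (PMF.uniformOfFinset (Finset.Icc 1 (n+1))
          (Finset.nonempty_Icc.mpr (Nat.le_add_left 1 n))).toMeasure ↑(Finset.Icc v₀ (n+1)) := by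
        rw [PMF.toMeasure_apply_finset]
        have hss : Finset.Icc v₀ (n+1) ⊆ Finset.Icc 1 (n+1) := by
          intro x hx; simp only [Finset.mem_Icc] at *; omega
        have hsum : ∑ a ∈ Finset.Icc v₀ (n+1),
            (PMF.uniformOfFinset (Finset.Icc 1 (n+1))
              (Finset.nonempty_Icc.mpr (Nat.le_add_left 1 n))) a
            = ((n + 2 - v₀ : ℕ) : ℝ≥0∞) * (((n+1 : ℕ) : ℝ≥0∞))⁻¹ := by
          rw [Finset.sum_congr rfl (fun a ha => PMF.uniformOfFinset_apply_of_mem _ (hss ha)),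
            Finset.sum_const, Nat.card_Icc, Nat.card_Icc, nsmul_eq_mul]
          norm_num
          have h112 : ((n:ℝ≥0∞) + 1 + 1) = (n:ℝ≥0∞) + 2 := by ring
          rw [h112]
        rw [hsum,
          ← ENNReal.ofReal_natCast (n+2-v₀), ← ENNReal.ofReal_natCast (n+1),
          ← ENNReal.ofReal_inv_of_pos (by exact_mod_cast Nat.succ_pos n),
          ← ENNReal.ofReal_mul (by positivity)]
        rw [← div_eq_mul_inv]
        have hcast2 : ((n + 2 - v₀ : ℕ) : ℝ) = (n:ℝ) + 2 - (v₀:ℝ) := by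
          push_cast [Nat.cast_sub (by omega : v₀ ≤ n + 2)]; ring
        rw [hcast2]
        have hv₀r : (v₀:ℝ) ≤ (n:ℝ)+1 := by exact_mod_cast hv₀2
        push_cast
        rw [ENNReal.ofReal_lt_ofReal_iff (div_pos (by linarith) hn1)]
        gcongr
        linarith
    _ ≤ _ := measure_mono hsub


/-- **No strictly smaller grid-valued contour is valid.** Let `V` be uniform on
`𝓘_{n+1} = {1,…,n+1}` and `γ'` a grid-valued contour with `γ'(v) ≤ 1 - (v-1)/(n+1)`
everywhere and strict inequality at some `v₀`.  Then `γ'` is not valid: there is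
`α ∈ [0,1]` with `P(γ'(V) ≤ k_n(α)) > α` where `k_n(α) = ⌊(n+1)α⌋/(n+1)`;
in particular `α = (n+1-v₀)/(n+1)` works. -/
theorem stmt7 (n : ℕ) (γ' : ℕ → ℝ)
    (hgrid : ∀ v ∈ Finset.Icc 1 (n+1),
      ∃ j ∈ Finset.range (n+2), γ' v = (j:ℝ)/((n:ℝ)+1))
    (hle : ∀ v ∈ Finset.Icc 1 (n+1), γ' v ≤ 1 - ((v:ℝ) - 1)/((n:ℝ)+1))
    (v₀ : ℕ) (hv₀ : v₀ ∈ Finset.Icc 1 (n+1))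
    (hlt : γ' v₀ < 1 - ((v₀:ℝ) - 1)/((n:ℝ)+1)) :
    ENNReal.ofReal (((n:ℝ) + 1 - (v₀:ℝ))/((n:ℝ)+1)) <
      (PMF.uniformOfFinset (Finset.Icc 1 (n+1))
          (Finset.nonempty_Icc.mpr (by omega))).toMeasure
        {v : ℕ | γ' v ≤
          (⌊((n:ℝ)+1) * (((n:ℝ) + 1 - (v₀:ℝ))/((n:ℝ)+1))⌋ : ℝ)/((n:ℝ)+1)} ∧
    ∃ α ∈ Set.Icc (0:ℝ) 1,
      ENNReal.ofReal α <
        (PMF.uniformOfFinset (Finset.Icc 1 (n+1))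
            (Finset.nonempty_Icc.mpr (by omega))).toMeasure
          {v : ℕ | γ' v ≤ (⌊((n:ℝ)+1)*α⌋ : ℝ)/((n:ℝ)+1)} := by
  have key := stmt7_key n γ' hgrid hle v₀ hv₀ hlt
  refine ⟨key, ((n:ℝ) + 1 - (v₀:ℝ))/((n:ℝ)+1), ?_, key⟩
  obtain ⟨h1, h2⟩ := Finset.mem_Icc.mp hv₀
  have hv₀r : (v₀:ℝ) ≤ (n:ℝ)+1 := by exact_mod_cast h2
  have h1r : (1:ℝ) ≤ (v₀:ℝ) := by exact_mod_cast h1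
  have hn1 : (0:ℝ) < (n:ℝ)+1 := by positivity
  constructor
  · apply div_nonneg (by linarith) hn1.le
  · rw [div_le_one hn1]; linarith
end

section
/- Let n ∈ ℕ and t₁, …, t_{n+1} be arbitrary real numbers. For each i ∈ {1, …, n+1} define the (anti-)rank R_i = #{ k ∈ {1, …, n+1} : t_k ≥ t_i }. Then for every integer j ≥ 0, #{ i ∈ {1, …, n+1} : R_i ≤ j } ≤ j. (Deterministic counting lemma underlying conformal validity, valid even in the presence of ties.) -/
/-- **Deterministic counting lemma underlying conformal validity.** For real numbers
`t₁,…,t_{n+1}` and anti-ranks `R_i = #{k : t_k ≥ t_i}`, at most `j` indices have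
`R_i ≤ j`, for every integer `j ≥ 0` (valid even with ties). -/
theorem stmt8 (n : ℕ) (t : Fin (n+1) → ℝ) (j : ℕ) :
    (Finset.univ.filter fun i : Fin (n+1) =>
        (Finset.univ.filter fun k : Fin (n+1) => t i ≤ t k).card ≤ j).card ≤ j := by
  set S := Finset.univ.filter fun i : Fin (n+1) =>
      (Finset.univ.filter fun k : Fin (n+1) => t i ≤ t k).card ≤ j with hS
  rcases S.eq_empty_or_nonempty with h | h
  · simp [h]
  · obtain ⟨i₀, hi₀S, hmin⟩ := S.exists_min_image t h
    have hsub : S ⊆ Finset.univ.filter fun k : Fin (n+1) => t i₀ ≤ t k := by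
      intro i hi
      simp only [Finset.mem_filter, Finset.mem_univ, true_and]
      exact hmin i hi
    have hcard := Finset.card_le_card hsub
    have : (Finset.univ.filter fun k : Fin (n+1) => t i₀ ≤ t k).card ≤ j := by
      simpa [hS] using (Finset.mem_filter.mp hi₀S).2
    omega
end

section
/- Let 𝒴 be a measurable space, n ∈ ℕ, and let (Y₁, …, Y_{n+1}) be an exchangeable random vector in 𝒴^{n+1}, i.e., its joint law is invariant under every permutation of the n+1 coordinates. Let Ψ : 𝒴ⁿ × 𝒴 → ℝ be a measurable non-conformity measure that is invariant under permutations of its first (vector) argument, and set T_i = Ψ( (Y_j)_{j ≠ i}, Y_i ) for i ∈ {1, …, n+1}. Define the conformal plausibility contour evaluated at the truth, π(Y_{n+1}; Yⁿ) = (n+1)^{-1} #{ i : T_i ≥ T_{n+1} }. Then for every α ∈ [0,1], ℙ( π(Y_{n+1}; Yⁿ) ≤ k_n(α) ) ≤ α, where k_n(α) = ⌊(n+1)α⌋/(n+1); in particular ℙ( π(Y_{n+1}; Yⁿ) ≤ α ) ≤ α for all α. (Calibration property (pi.1) of the conformal transducer.) -/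
open MeasureTheory

lemma count_aux {m : ℕ} (t : Fin m → ℝ) (k : ℕ) :
    (Finset.univ.filter fun i : Fin m =>
      (Finset.univ.filter fun j => t i ≤ t j).card ≤ k).card ≤ k := by
  set S := Finset.univ.filter fun i : Fin m =>
      (Finset.univ.filter fun j => t i ≤ t j).card ≤ k with hS
  rcases S.eq_empty_or_nonempty with h | h
  · simp [h]
  · obtain ⟨i₀, hi₀S, hmin⟩ := S.exists_min_image t h
    have hsub : S ⊆ Finset.univ.filter fun j => t i₀ ≤ t j := by
      intro i hi
      simp only [Finset.mem_filter, Finset.mem_univ, true_and]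
      exact hmin i hi
    calc S.card ≤ _ := Finset.card_le_card hsub
      _ ≤ k := (Finset.mem_filter.mp hi₀S).2

lemma equivariance_aux {𝒴 : Type*} {n : ℕ} (Ψ : (Fin n → 𝒴) → 𝒴 → ℝ)
    (hsym : ∀ σ : Equiv.Perm (Fin n), ∀ v y, Ψ (v ∘ σ) y = Ψ v y)
    (σ : Equiv.Perm (Fin (n+1))) (y : Fin (n+1) → 𝒴) (i : Fin (n+1)) :
    Ψ (fun j => y (σ (i.succAbove j))) (y (σ i))
      = Ψ (fun j => y ((σ i).succAbove j)) (y (σ i)) := by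
  have hpred : ∀ a : Fin (n+1), a ≠ i ↔ σ a ≠ σ i := by
    intro a; simp [σ.injective.eq_iff]
  set τ : Equiv.Perm (Fin n) :=
    (finSuccAboveEquiv i).trans ((σ.subtypeEquiv hpred).trans
      (finSuccAboveEquiv (σ i)).symm) with hτ
  have key : ∀ j : Fin n, (σ i).succAbove (τ j) = σ (i.succAbove j) := by
    intro j
    have : finSuccAboveEquiv (σ i) (τ j)
        = ⟨σ (i.succAbove j), by
            simp [σ.injective.eq_iff, Fin.succAbove_ne]⟩ := by
      simp [hτ, finSuccAboveEquiv_apply, Equiv.subtypeEquiv]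
    simpa [finSuccAboveEquiv_apply, Subtype.ext_iff] using congrArg Subtype.val this
  calc Ψ (fun j => y (σ (i.succAbove j))) (y (σ i))
      = Ψ ((fun j => y ((σ i).succAbove j)) ∘ τ) (y (σ i)) := by
        congr 1; funext j; simp [key j]
    _ = Ψ (fun j => y ((σ i).succAbove j)) (y (σ i)) := hsym τ _ _

/-- **Calibration property (pi.1) of the conformal transducer.** For an exchangeable
vector `(Y₁,…,Y_{n+1})` and a symmetric non-conformity measure `Ψ`, with
`T_i = Ψ((Y_j)_{j≠i}, Y_i)` and conformal plausibility contour at the truth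
`π(Y_{n+1}; Yⁿ) = (n+1)⁻¹ #{i : T_i ≥ T_{n+1}}`, one has
`P(π(Y_{n+1}; Yⁿ) ≤ k_n(α)) ≤ α` for all `α ∈ [0,1]`, with `k_n(α) = ⌊(n+1)α⌋/(n+1)`;
in particular `P(π(Y_{n+1}; Yⁿ) ≤ α) ≤ α`. -/
theorem stmt9
    {Ω 𝒴 : Type*} [MeasurableSpace Ω] [MeasurableSpace 𝒴]
    (Pr : Measure Ω) [IsProbabilityMeasure Pr] (n : ℕ)
    (Y : Fin (n+1) → Ω → 𝒴) (hY : ∀ i, Measurable (Y i))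
    (hexch : ∀ σ : Equiv.Perm (Fin (n+1)),
      Measure.map (fun ω => fun i => Y (σ i) ω) Pr
        = Measure.map (fun ω => fun i => Y i ω) Pr)
    (Ψ : (Fin n → 𝒴) → 𝒴 → ℝ)
    (hΨ : Measurable fun p : (Fin n → 𝒴) × 𝒴 => Ψ p.1 p.2)
    (hsym : ∀ σ : Equiv.Perm (Fin n), ∀ v y, Ψ (v ∘ σ) y = Ψ v y) :
    ∀ α ∈ Set.Icc (0:ℝ) 1,
      Pr {ω | ((Finset.univ.filter fun i : Fin (n+1) =>
            Ψ (fun j => Y ((Fin.last n).succAbove j) ω) (Y (Fin.last n) ω)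
              ≤ Ψ (fun j => Y (i.succAbove j) ω) (Y i ω)).card : ℝ) / ((n:ℝ)+1)
          ≤ (⌊((n:ℝ)+1)*α⌋ : ℝ)/((n:ℝ)+1)} ≤ ENNReal.ofReal α ∧
      Pr {ω | ((Finset.univ.filter fun i : Fin (n+1) =>
            Ψ (fun j => Y ((Fin.last n).succAbove j) ω) (Y (Fin.last n) ω)
              ≤ Ψ (fun j => Y (i.succAbove j) ω) (Y i ω)).card : ℝ) / ((n:ℝ)+1)
          ≤ α} ≤ ENNReal.ofReal α := by
  intro α hα
  obtain ⟨hα0, hα1⟩ := hα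
  -- setup
  set g : (Fin (n+1) → 𝒴) → Fin (n+1) → ℝ :=
    fun y i => Ψ (fun j => y (i.succAbove j)) (y i) with hg_def
  have hg : ∀ i, Measurable (fun y => g y i) := by
    intro i
    have hpair : Measurable fun y : Fin (n+1) → 𝒴 =>
        ((fun j => y (i.succAbove j), y i) : (Fin n → 𝒴) × 𝒴) :=
      (measurable_pi_lambda _ fun j => measurable_pi_apply _).prodMk
        (measurable_pi_apply i)
    exact hΨ.comp hpair
  have hnpos : (0:ℝ) < (n:ℝ) + 1 := by positivity
  -- K
  set K : ℕ := (⌊((n:ℝ)+1)*α⌋).toNat with hK_def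
  have hfloor_nonneg : (0:ℤ) ≤ ⌊((n:ℝ)+1)*α⌋ := Int.floor_nonneg.2 (by positivity)
  have hKle : (K:ℝ) ≤ ((n:ℝ)+1)*α := by
    have h0 : ((⌊((n:ℝ)+1)*α⌋).toNat : ℤ) = ⌊((n:ℝ)+1)*α⌋ :=
      Int.toNat_of_nonneg hfloor_nonneg
    have h1 : ((K:ℤ):ℝ) = ((⌊((n:ℝ)+1)*α⌋ : ℤ) : ℝ) := by
      rw [hK_def, h0]
    rw [show ((K:ℝ)) = ((K:ℤ):ℝ) by push_cast; ring, h1]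
    exact Int.floor_le _
  have key1 : ∀ c : ℕ, ((c:ℝ) ≤ ((⌊((n:ℝ)+1)*α⌋ : ℤ) : ℝ) ↔ c ≤ K) := by
    intro c
    rw [show ((c:ℝ)) = ((c:ℤ):ℝ) by push_cast; ring, Int.cast_le, hK_def]
    omega
  have key2 : ∀ c : ℕ, ((c:ℝ) ≤ ((n:ℝ)+1)*α ↔ c ≤ K) := by
    intro c
    rw [show ((c:ℝ)) = ((c:ℤ):ℝ) by push_cast; ring, ← Int.le_floor, hK_def]
    omega
  -- events
  set A : Fin (n+1) → Set (Fin (n+1) → 𝒴) :=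
    fun i₀ => {y | (Finset.univ.filter fun i => g y i₀ ≤ g y i).card ≤ K} with hA_def
  have hcard_meas : ∀ i₀, Measurable (fun y =>
      (Finset.univ.filter fun i => g y i₀ ≤ g y i).card) := by
    intro i₀
    have : (fun y => (Finset.univ.filter fun i => g y i₀ ≤ g y i).card)
        = fun y => ∑ i : Fin (n+1), if g y i₀ ≤ g y i then 1 else 0 := by
      funext y; rw [Finset.card_filter]
    rw [this]
    exact Finset.measurable_sum _ fun i _ =>
      Measurable.ite (measurableSet_le (hg i₀) (hg i)) measurable_const measurable_const
  have hA_meas : ∀ i₀, MeasurableSet (A i₀) := by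
    intro i₀
    exact (hcard_meas i₀) (measurableSet_le measurable_id measurable_const)
  -- law
  set Yv : Ω → (Fin (n+1) → 𝒴) := fun ω i => Y i ω with hYv_def
  have hYv : Measurable Yv := measurable_pi_lambda _ fun i => hY i
  set μ : Measure (Fin (n+1) → 𝒴) := Measure.map Yv Pr with hμ_def
  have hμprob : IsProbabilityMeasure μ := Measure.isProbabilityMeasure_map hYv.aemeasurable
  -- exchangeability of g-vector: μ (A i₀) = μ (A last)
  have hmapμ : ∀ σ : Equiv.Perm (Fin (n+1)),
      Measure.map (fun y : Fin (n+1) → 𝒴 => fun i => y (σ i)) μ = μ := by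
    intro σ
    have hmeas : Measurable (fun y : Fin (n+1) → 𝒴 => fun i => y (σ i)) :=
      measurable_pi_lambda _ fun i => measurable_pi_apply _
    rw [hμ_def, Measure.map_map hmeas hYv]
    exact hexch σ
  have hpre : ∀ (σ : Equiv.Perm (Fin (n+1))) (p : Fin (n+1)),
      (fun y : Fin (n+1) → 𝒴 => fun i => y (σ i)) ⁻¹' (A p) = A (σ p) := by
    intro σ p
    ext y
    simp only [hA_def, Set.mem_preimage, Set.mem_setOf_eq]
    have hg_eq : ∀ i, g (fun i => y (σ i)) i = g y (σ i) := by
      intro i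
      simpa [hg_def] using equivariance_aux Ψ hsym σ y i
    have hcard_eq : (Finset.univ.filter fun i => g (fun i => y (σ i)) p
          ≤ g (fun i => y (σ i)) i).card
        = (Finset.univ.filter fun i => g y (σ p) ≤ g y i).card := by
      simp only [hg_eq]
      apply Finset.card_bij (fun i _ => σ i)
      · intro a ha
        simp only [Finset.mem_filter, Finset.mem_univ, true_and] at ha ⊢
        exact ha
      · intro a _ b _ hab
        exact σ.injective hab
      · intro b hb
        refine ⟨σ.symm b, ?_, by simp⟩
        simp only [Finset.mem_filter, Finset.mem_univ, true_and] at hb ⊢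
        simpa using hb
    rw [hcard_eq]
  have hmap : ∀ i₀, μ (A i₀) = μ (A (Fin.last n)) := by
    intro i₀
    set σ : Equiv.Perm (Fin (n+1)) := Equiv.swap (Fin.last n) i₀ with hσ
    have hmeas : Measurable (fun y : Fin (n+1) → 𝒴 => fun i => y (σ i)) :=
      measurable_pi_lambda _ fun i => measurable_pi_apply _
    have := congrArg (fun m : Measure _ => m (A (Fin.last n))) (hmapμ σ)
    rw [Measure.map_apply hmeas (hA_meas _), hpre σ (Fin.last n)] at this
    rw [← this, hσ, Equiv.swap_apply_left]
  -- sum bound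
  have hsum_le : ∑ i₀ : Fin (n+1), μ (A i₀) ≤ (K : ENNReal) := by
    have h1 : ∑ i₀ : Fin (n+1), μ (A i₀)
        = ∫⁻ y, ∑ i₀ : Fin (n+1), (A i₀).indicator (fun _ => (1:ENNReal)) y ∂μ := by
      rw [lintegral_finset_sum]
      · exact Finset.sum_congr rfl fun i₀ _ => (lintegral_indicator_one (hA_meas i₀)).symm
      · intro i₀ _
        exact measurable_const.indicator (hA_meas i₀)
    rw [h1]
    have hpt : ∀ y, (∑ i₀ : Fin (n+1), (A i₀).indicator (fun _ => (1:ENNReal)) y)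
        ≤ (K : ENNReal) := by
      intro y
      classical
      have h2 : (∑ i₀ : Fin (n+1), (A i₀).indicator (fun _ => (1:ENNReal)) y)
          = ((Finset.univ.filter fun i₀ : Fin (n+1) => y ∈ A i₀).card : ENNReal) := by
        rw [Finset.card_filter]
        push_cast
        refine Finset.sum_congr rfl fun i₀ _ => ?_
        by_cases h : y ∈ A i₀ <;> simp [Set.indicator_apply, h]
      rw [h2]
      have h3 : (Finset.univ.filter fun i₀ : Fin (n+1) => y ∈ A i₀).card ≤ K := by
        have := count_aux (g y) K
        simpa [hA_def, Set.mem_setOf_eq] using this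
      exact_mod_cast Nat.cast_le.2 h3
    calc ∫⁻ y, ∑ i₀ : Fin (n+1), (A i₀).indicator (fun _ => (1:ENNReal)) y ∂μ
        ≤ ∫⁻ _, (K : ENNReal) ∂μ := lintegral_mono hpt
      _ = (K : ENNReal) := by simp
  have hsum_eq : ∑ i₀ : Fin (n+1), μ (A i₀) = ((n:ENNReal)+1) * μ (A (Fin.last n)) := by
    rw [Finset.sum_congr rfl fun i₀ _ => hmap i₀, Finset.sum_const]
    simp only [Finset.card_univ, Fintype.card_fin, nsmul_eq_mul]
    push_cast
    ring
  -- main bound on μ (A last)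
  have hmain : μ (A (Fin.last n)) ≤ ENNReal.ofReal α := by
    have h4 : ((n:ENNReal)+1) * μ (A (Fin.last n)) ≤ (K : ENNReal) := by
      rw [← hsum_eq]; exact hsum_le
    have h5 : μ (A (Fin.last n)) ≤ (K : ENNReal) / ((n:ENNReal)+1) := by
      rw [ENNReal.le_div_iff_mul_le (by simp) (by simp)]
      rwa [mul_comm]
    refine h5.trans ?_
    have h6 : (K : ENNReal) / ((n:ENNReal)+1) = ENNReal.ofReal ((K:ℝ)/((n:ℝ)+1)) := by
      rw [ENNReal.ofReal_div_of_pos hnpos]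
      congr 1
      · exact (ENNReal.ofReal_natCast K).symm
      · rw [ENNReal.ofReal_add (by positivity) zero_le_one]
        simp [ENNReal.ofReal_natCast]
    rw [h6]
    exact ENNReal.ofReal_le_ofReal (by rw [div_le_iff₀ hnpos]; linarith [hKle])
  -- both events equal Yv ⁻¹' (A last)
  have hset1 : {ω | ((Finset.univ.filter fun i : Fin (n+1) =>
            Ψ (fun j => Y ((Fin.last n).succAbove j) ω) (Y (Fin.last n) ω)
              ≤ Ψ (fun j => Y (i.succAbove j) ω) (Y i ω)).card : ℝ) / ((n:ℝ)+1)
          ≤ (⌊((n:ℝ)+1)*α⌋ : ℝ)/((n:ℝ)+1)} = Yv ⁻¹' (A (Fin.last n)) := by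
    ext ω
    simp only [Set.mem_setOf_eq, Set.mem_preimage, hA_def, hYv_def, hg_def]
    rw [div_le_div_iff_of_pos_right hnpos]
    exact key1 _
  have hset2 : {ω | ((Finset.univ.filter fun i : Fin (n+1) =>
            Ψ (fun j => Y ((Fin.last n).succAbove j) ω) (Y (Fin.last n) ω)
              ≤ Ψ (fun j => Y (i.succAbove j) ω) (Y i ω)).card : ℝ) / ((n:ℝ)+1)
          ≤ α} = Yv ⁻¹' (A (Fin.last n)) := by
    ext ω
    simp only [Set.mem_setOf_eq, Set.mem_preimage, hA_def, hYv_def, hg_def]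
    rw [div_le_iff₀ hnpos, mul_comm]
    exact key2 _
  have hPr : Pr (Yv ⁻¹' (A (Fin.last n))) = μ (A (Fin.last n)) := by
    rw [hμ_def, Measure.map_apply hYv (hA_meas _)]
  constructor
  · rw [hset1, hPr]; exact hmain
  · rw [hset2, hPr]; exact hmain
end

section
/- Let 𝒴 be a measurable space, n ∈ ℕ, (Y₁, …, Y_{n+1}) an exchangeable random vector in 𝒴^{n+1}, and Ψ : 𝒴ⁿ × 𝒴 → ℝ a measurable non-conformity measure invariant under permutations of its first argument, with T_i = Ψ((Y_j)_{j≠i}, Y_i). Assume the values T₁, …, T_{n+1} are almost surely pairwise distinct. Then the rank R = #{ i : T_i ≥ T_{n+1} } of T_{n+1} is uniformly distributed on {1, …, n+1}: ℙ(R = v) = 1/(n+1) for every v ∈ {1, …, n+1}. (Uniformity of the rank auxiliary variable in the A-step of the nonparametric IM construction.) -/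
open MeasureTheory
open scoped ENNReal

lemma stmt10_aux_perm {n : ℕ} (σ : Equiv.Perm (Fin (n+1))) (i : Fin (n+1)) :
    ∃ τ : Equiv.Perm (Fin n), ∀ j, σ (i.succAbove j) = (σ i).succAbove (τ j) := by
  set f : Fin n → Fin (n+1) := fun j => σ (i.succAbove j) with hf
  set g : Fin n → Fin (n+1) := fun j => (σ i).succAbove j with hg
  have hfinj : Function.Injective f := σ.injective.comp (Fin.succAbove_right_injective)
  have hginj : Function.Injective g := Fin.succAbove_right_injective
  have hrange : Set.range f = Set.range g := by
    have h1 : Set.range f = σ '' Set.range (i.succAbove) := by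
      rw [← Set.range_comp]; rfl
    rw [h1, Fin.range_succAbove, Fin.range_succAbove]
    ext x
    simp only [Set.image_compl_eq σ.bijective, Set.image_singleton, Set.mem_compl_iff,
      Set.mem_singleton_iff]
  let e1 : Fin n ≃ Set.range f := Equiv.ofInjective f hfinj
  let e2 : Fin n ≃ Set.range g := Equiv.ofInjective g hginj
  refine ⟨e1.trans ((Equiv.setCongr hrange).trans e2.symm), fun j => ?_⟩
  have : g ((e1.trans ((Equiv.setCongr hrange).trans e2.symm)) j) =
      ((Equiv.setCongr hrange) (e1 j) : Fin (n+1)) := by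
    simp only [Equiv.trans_apply]
    exact congrArg Subtype.val (e2.apply_symm_apply _)
  rw [show (Fin.succAbove (σ i)) = g from rfl, this]
  rfl

/-- **Uniformity of the rank auxiliary variable (A-step of the nonparametric IM).**
For an exchangeable vector `(Y₁,…,Y_{n+1})` and a symmetric non-conformity measure `Ψ`,
with `T_i = Ψ((Y_j)_{j≠i}, Y_i)` almost surely pairwise distinct, the (descending) rank
`R = #{i : T_i ≥ T_{n+1}}` is uniform on `{1,…,n+1}`: `P(R = v) = 1/(n+1)`. -/
theorem stmt10
    {Ω 𝒴 : Type*} [MeasurableSpace Ω] [MeasurableSpace 𝒴]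
    (Pr : Measure Ω) [IsProbabilityMeasure Pr] (n : ℕ)
    (Y : Fin (n+1) → Ω → 𝒴) (hY : ∀ i, Measurable (Y i))
    (hexch : ∀ σ : Equiv.Perm (Fin (n+1)),
      Measure.map (fun ω => fun i => Y (σ i) ω) Pr
        = Measure.map (fun ω => fun i => Y i ω) Pr)
    (Ψ : (Fin n → 𝒴) → 𝒴 → ℝ)
    (hΨ : Measurable fun p : (Fin n → 𝒴) × 𝒴 => Ψ p.1 p.2)
    (hsym : ∀ σ : Equiv.Perm (Fin n), ∀ v y, Ψ (v ∘ σ) y = Ψ v y)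
    (hdist : ∀ᵐ ω ∂Pr, ∀ i i' : Fin (n+1), i ≠ i' →
      Ψ (fun j => Y (i.succAbove j) ω) (Y i ω)
        ≠ Ψ (fun j => Y (i'.succAbove j) ω) (Y i' ω)) :
    ∀ v ∈ Finset.Icc 1 (n+1),
      Pr {ω | (Finset.univ.filter fun i : Fin (n+1) =>
            Ψ (fun j => Y ((Fin.last n).succAbove j) ω) (Y (Fin.last n) ω)
              ≤ Ψ (fun j => Y (i.succAbove j) ω) (Y i ω)).card = v}
        = ((n : ℝ≥0∞) + 1)⁻¹ := by
  intro v hv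
  classical
  -- the joint law on path space
  have hYm : Measurable (fun ω => fun i => Y i ω) := measurable_pi_lambda _ hY
  set μ : Measure (Fin (n+1) → 𝒴) := Measure.map (fun ω => fun i => Y i ω) Pr with hμ
  haveI : IsProbabilityMeasure μ := Measure.isProbabilityMeasure_map hYm.aemeasurable
  -- the non-conformity scores as functions on path space
  set T : Fin (n+1) → (Fin (n+1) → 𝒴) → ℝ :=
    fun i y => Ψ (fun j => y (i.succAbove j)) (y i) with hTdef
  have hT : ∀ i, Measurable (T i) := by
    intro i
    have hpair : Measurable fun y : Fin (n+1) → 𝒴 =>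
        ((fun j => y (i.succAbove j), y i) : (Fin n → 𝒴) × 𝒴) :=
      (measurable_pi_lambda _ fun j => measurable_pi_apply _).prodMk (measurable_pi_apply i)
    exact hΨ.comp hpair
  -- ranks
  set R : Fin (n+1) → (Fin (n+1) → 𝒴) → ℕ :=
    fun i y => (Finset.univ.filter fun k => T i y ≤ T k y).card with hRdef
  have hRm : ∀ i, Measurable (R i) := by
    intro i
    have : R i = fun y => ∑ k : Fin (n+1), if T i y ≤ T k y then 1 else 0 := by
      funext y; exact Finset.card_filter _ _
    rw [this]
    exact Finset.measurable_sum _ fun k _ =>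
      Measurable.ite (measurableSet_le (hT i) (hT k)) measurable_const measurable_const
  set A : Fin (n+1) → Set (Fin (n+1) → 𝒴) := fun i => {y | R i y = v} with hAdef
  have hA : ∀ i, MeasurableSet (A i) := fun i => (hRm i) (measurableSet_singleton v)
  -- score under permuted path
  have hTperm : ∀ (σ : Equiv.Perm (Fin (n+1))) (i : Fin (n+1)) (y : Fin (n+1) → 𝒴),
      T i (y ∘ σ) = T (σ i) y := by
    intro σ i y
    obtain ⟨τ, hτ⟩ := stmt10_aux_perm σ i
    have h1 : (fun j => (y ∘ σ) (i.succAbove j)) =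
        (fun j => y ((σ i).succAbove j)) ∘ τ := by
      funext j; exact congrArg y (hτ j)
    show Ψ (fun j => (y ∘ σ) (i.succAbove j)) ((y ∘ σ) i)
        = Ψ (fun j => y ((σ i).succAbove j)) (y (σ i))
    rw [h1]
    exact hsym τ _ _
  -- rank under permuted path
  have hRperm : ∀ (σ : Equiv.Perm (Fin (n+1))) (i : Fin (n+1)) (y : Fin (n+1) → 𝒴),
      R i (y ∘ σ) = R (σ i) y := by
    intro σ i y
    simp only [hRdef, hTperm σ]
    apply Finset.card_bij (fun k _ => σ k)
    · intro k hk; simp only [Finset.mem_filter, Finset.mem_univ, true_and] at hk ⊢; exact hk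
    · intro a _ b _ hab; exact σ.injective hab
    · intro b hb
      refine ⟨σ.symm b, ?_, by simp⟩
      simp only [Finset.mem_filter, Finset.mem_univ, true_and] at hb ⊢
      simpa using hb
  -- invariance of μ under coordinate permutations
  have hμinv : ∀ σ : Equiv.Perm (Fin (n+1)),
      Measure.map (fun y : Fin (n+1) → 𝒴 => y ∘ σ) μ = μ := by
    intro σ
    have hpm : Measurable (fun y : Fin (n+1) → 𝒴 => y ∘ σ) :=
      measurable_pi_lambda _ fun i => measurable_pi_apply (σ i)
    rw [hμ, Measure.map_map hpm hYm]
    exact hexch σ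
  -- all ranks are equidistributed
  have hAeq : ∀ i : Fin (n+1), μ (A i) = μ (A (Fin.last n)) := by
    intro i
    set σ : Equiv.Perm (Fin (n+1)) := Equiv.swap (Fin.last n) i with hσ
    have hpm : Measurable (fun y : Fin (n+1) → 𝒴 => y ∘ σ) :=
      measurable_pi_lambda _ fun k => measurable_pi_apply (σ k)
    have h1 : μ (A (Fin.last n)) = μ ((fun y => y ∘ σ) ⁻¹' (A (Fin.last n))) := by
      conv_lhs => rw [← hμinv σ]
      rw [Measure.map_apply hpm (hA (Fin.last n))]
    have h2 : (fun y : Fin (n+1) → 𝒴 => y ∘ σ) ⁻¹' (A (Fin.last n)) = A i := by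
      ext y
      simp only [Set.mem_preimage, hAdef, Set.mem_setOf_eq, hRperm σ]
      rw [show σ (Fin.last n) = i from Equiv.swap_apply_left _ _]
    rw [h1, h2]
  -- the a.s. distinctness set
  set D : Set (Fin (n+1) → 𝒴) :=
    {y | ∀ i i' : Fin (n+1), i ≠ i' → T i y ≠ T i' y} with hDdef
  have hDm : MeasurableSet D := by
    have : D = ⋂ (i : Fin (n+1)) (i' : Fin (n+1)) (_ : i ≠ i'),
        {y | T i y = T i' y}ᶜ := by
      ext y; simp [hDdef, Set.mem_iInter]
    rw [this]
    exact MeasurableSet.iInter fun i => MeasurableSet.iInter fun i' =>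
      MeasurableSet.iInter fun _ => (measurableSet_eq_fun (hT i) (hT i')).compl
  have hDfull : μ D = 1 := by
    rw [hμ, Measure.map_apply hYm hDm]
    have hsub : {ω | ∀ i i' : Fin (n+1), i ≠ i' →
        Ψ (fun j => Y (i.succAbove j) ω) (Y i ω)
          ≠ Ψ (fun j => Y (i'.succAbove j) ω) (Y i' ω)} =
        (fun ω => fun i => Y i ω) ⁻¹' D := rfl
    rw [← hsub]
    have hms : MeasurableSet {ω | ∀ i i' : Fin (n+1), i ≠ i' →
        Ψ (fun j => Y (i.succAbove j) ω) (Y i ω)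
          ≠ Ψ (fun j => Y (i'.succAbove j) ω) (Y i' ω)} := hsub ▸ hYm hDm
    rw [← prob_compl_eq_zero_iff hms]
    have h0 := MeasureTheory.ae_iff.mp hdist
    simpa [Set.compl_setOf] using h0
  -- on D, ranks are injective in i
  have hkey : ∀ y, ∀ a b : Fin (n+1), T a y < T b y → R b y < R a y := by
    intro y a b h
    apply Finset.card_lt_card
    constructor
    · intro k hk
      simp only [Finset.mem_filter, Finset.mem_univ, true_and] at hk ⊢
      exact le_trans h.le hk
    · intro hsub
      have ha : a ∈ Finset.univ.filter fun k => T a y ≤ T k y := by simp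
      have := hsub ha
      simp only [Finset.mem_filter, Finset.mem_univ, true_and] at this
      exact absurd this (not_le.mpr h)
  have hinj : ∀ y ∈ D, ∀ i i' : Fin (n+1), R i y = R i' y → i = i' := by
    intro y hy i i' hR
    by_contra hne
    have hT' : T i y ≠ T i' y := hy i i' hne
    rcases lt_or_gt_of_ne hT' with h | h
    · exact absurd hR (by have := hkey y i i' h; omega)
    · exact absurd hR (by have := hkey y i' i h; omega)
  -- on D, for our v there exists i with rank v
  have hsurj : ∀ y ∈ D, ∃ i : Fin (n+1), R i y = v := by
    intro y hy
    have himg : Finset.image (fun i => R i y) Finset.univ = Finset.Icc 1 (n+1) := by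
      apply Finset.eq_of_subset_of_card_le
      · intro w hw
        simp only [Finset.mem_image, Finset.mem_univ, true_and] at hw
        obtain ⟨i, hi⟩ := hw
        rw [Finset.mem_Icc]
        constructor
        · rw [← hi]
          have : i ∈ Finset.univ.filter fun k => T i y ≤ T k y := by simp
          exact Finset.card_pos.mpr ⟨i, this⟩
        · rw [← hi]
          calc (Finset.univ.filter fun k => T i y ≤ T k y).card
              ≤ (Finset.univ : Finset (Fin (n+1))).card := Finset.card_filter_le _ _
            _ = n + 1 := by simp
      · rw [Finset.card_image_of_injective _ (fun a b h => hinj y hy a b h)]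
        simp [Nat.Icc_eq_range']
    have : v ∈ Finset.image (fun i => R i y) Finset.univ := himg ▸ hv
    simpa using this
  -- sum of the measures is 1
  have hsum : ∑ i : Fin (n+1), μ (A i) = 1 := by
    have h1 : ∀ i, μ (A i) = μ (A i ∩ D) := by
      intro i
      rw [measure_inter_conull (by rw [prob_compl_eq_zero_iff hDm]; exact hDfull)]
    have h2 : Pairwise (Function.onFun Disjoint fun i => A i ∩ D) := by
      intro i i' hne
      rw [Function.onFun, Set.disjoint_iff]
      rintro y ⟨⟨hy1, hyD⟩, hy2, _⟩
      exact hne (hinj y hyD i i' (hy1.trans hy2.symm))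
    have h3 : ⋃ i, A i ∩ D = D := by
      ext y
      simp only [Set.mem_iUnion, Set.mem_inter_iff]
      constructor
      · rintro ⟨i, _, h⟩; exact h
      · intro hy; obtain ⟨i, hi⟩ := hsurj y hy; exact ⟨i, hi, hy⟩
    calc ∑ i : Fin (n+1), μ (A i) = ∑ i : Fin (n+1), μ (A i ∩ D) := by
          exact Finset.sum_congr rfl fun i _ => h1 i
      _ = ∑' i : Fin (n+1), μ (A i ∩ D) := (tsum_fintype _).symm
      _ = μ (⋃ i, A i ∩ D) :=
          (measure_iUnion h2 (fun i => (hA i).inter hDm)).symm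
      _ = μ D := by rw [h3]
      _ = 1 := hDfull
  -- conclude
  have hlast : ((n : ℝ≥0∞) + 1) * μ (A (Fin.last n)) = 1 := by
    have hs : ∑ i : Fin (n+1), μ (A i) = ((n : ℝ≥0∞) + 1) * μ (A (Fin.last n)) := by
      rw [Finset.sum_congr rfl fun i _ => hAeq i, Finset.sum_const, Finset.card_univ,
        Fintype.card_fin, nsmul_eq_mul]
      push_cast
      ring
    rw [← hs]
    exact hsum
  have hfin : Pr {ω | (Finset.univ.filter fun i : Fin (n+1) =>
        Ψ (fun j => Y ((Fin.last n).succAbove j) ω) (Y (Fin.last n) ω)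
          ≤ Ψ (fun j => Y (i.succAbove j) ω) (Y i ω)).card = v}
      = μ (A (Fin.last n)) := by
    rw [hμ, Measure.map_apply hYm (hA (Fin.last n))]
    rfl
  rw [hfin]
  have h0 : ((n : ℝ≥0∞) + 1) ≠ 0 := by simp
  have htop : ((n : ℝ≥0∞) + 1) ≠ ⊤ := by
    simp [ENNReal.add_ne_top]
  calc μ (A (Fin.last n)) = ((n : ℝ≥0∞) + 1)⁻¹ * (((n : ℝ≥0∞) + 1) * μ (A (Fin.last n))) := by
        rw [← mul_assoc, ENNReal.inv_mul_cancel h0 htop, one_mul]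
    _ = ((n : ℝ≥0∞) + 1)⁻¹ := by rw [hlast, mul_one]
end

section
/- Let 𝒴 be a measurable space, n ∈ ℕ, (Y₁, …, Y_{n+1}) an exchangeable random vector in 𝒴^{n+1}, and Ψ : 𝒴ⁿ × 𝒴 → ℝ a measurable non-conformity measure invariant under permutations of its first argument. For observed data yⁿ ∈ 𝒴ⁿ and candidate value ỹ ∈ 𝒴, define the conformal plausibility contour π(ỹ; yⁿ) = (n+1)^{-1} Σ_{i=1}^{n+1} 1{ T_i(yⁿ, ỹ) ≥ T_{n+1}(yⁿ, ỹ) }, where T_i(yⁿ, ỹ) = Ψ((yⁿ, ỹ)_{−i}, (yⁿ, ỹ)_i), and the consonant upper predictive probability Π̄_{yⁿ}(A) = sup_{ỹ ∈ A} π(ỹ; yⁿ). Then this probabilistic predictor is strongly valid: for every subset A ⊆ 𝒴 and every α ∈ [0,1], the event {Π̄_{Yⁿ}(A) ≤ k_n(α) and Y_{n+1} ∈ A} is contained in {π(Y_{n+1}; Yⁿ) ≤ k_n(α)}, and its outer probability is at most α, where k_n(α) = ⌊(n+1)α⌋/(n+1). (Theorem 2: strong validity of the nonparametric IM / conformal-plus-consonance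 predictor.) -/
open MeasureTheory

/-- The conformal plausibility contour: for observed data `yn ∈ 𝒴ⁿ` and candidate value
`yt ∈ 𝒴`, writing `y^{n+1} = (yn, yt)` (via `Fin.snoc`) and
`T_i = Ψ(y^{n+1}_{-i}, y^{n+1}_i)`, it equals `(n+1)⁻¹ #{i : T_i ≥ T_{n+1}}`. -/
noncomputable def conformalContour {𝒴 : Type*} (n : ℕ)
    (Ψ : (Fin n → 𝒴) → 𝒴 → ℝ) (yn : Fin n → 𝒴) (yt : 𝒴) : ℝ :=
  let y' : Fin (n+1) → 𝒴 := Fin.snoc yn yt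
  ((Finset.univ.filter fun i : Fin (n+1) =>
      Ψ (fun j => y' ((Fin.last n).succAbove j)) (y' (Fin.last n))
        ≤ Ψ (fun j => y' (i.succAbove j)) (y' i)).card : ℝ)
    / ((n:ℝ)+1)

section Aux
variable {𝒴 : Type*} [MeasurableSpace 𝒴]

noncomputable def Tsc (n : ℕ) (Ψ : (Fin n → 𝒴) → 𝒴 → ℝ) (i : Fin (n+1))
    (y : Fin (n+1) → 𝒴) : ℝ :=
  Ψ (fun j => y (i.succAbove j)) (y i)

noncomputable def Ncount (n : ℕ) (Ψ : (Fin n → 𝒴) → 𝒴 → ℝ) (i : Fin (n+1))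
    (y : Fin (n+1) → 𝒴) : ℕ :=
  (Finset.univ.filter fun j => Tsc n Ψ i y ≤ Tsc n Ψ j y).card

lemma exists_perm_comp {n m : ℕ} {f g : Fin n → Fin m} (hf : Function.Injective f)
    (hg : Function.Injective g) (h : Set.range f = Set.range g) :
    ∃ τ : Equiv.Perm (Fin n), f = g ∘ τ := by
  refine ⟨(Equiv.ofInjective f hf).trans ((Equiv.setCongr h).trans
    (Equiv.ofInjective g hg).symm), ?_⟩
  funext j
  simp only [Function.comp_apply, Equiv.trans_apply, Equiv.setCongr]
  have := (Equiv.apply_ofInjective_symm hg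
    ((Equiv.subtypeEquivProp h) ((Equiv.ofInjective f hf) j))).symm
  exact this

lemma Tsc_comp_perm {n : ℕ} (Ψ : (Fin n → 𝒴) → 𝒴 → ℝ)
    (hsym : ∀ σ : Equiv.Perm (Fin n), ∀ v y, Ψ (v ∘ σ) y = Ψ v y)
    (σ : Equiv.Perm (Fin (n+1))) (i : Fin (n+1)) (y : Fin (n+1) → 𝒴) :
    Tsc n Ψ i (y ∘ σ) = Tsc n Ψ (σ i) y := by
  have hf : Function.Injective (fun j => σ (i.succAbove j)) :=
    σ.injective.comp (Fin.succAbove_right_injective)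
  have hg : Function.Injective ((σ i).succAbove) := Fin.succAbove_right_injective
  have hr : Set.range (fun j => σ (i.succAbove j)) = Set.range ((σ i).succAbove) := by
    have h1 : Set.range (fun j => σ (i.succAbove j)) = σ '' Set.range (i.succAbove) :=
      Set.range_comp σ i.succAbove
    rw [h1, Fin.range_succAbove, Fin.range_succAbove,
      Set.image_compl_eq σ.bijective, Set.image_singleton]
  obtain ⟨τ, hτ⟩ := exists_perm_comp hf hg hr
  show Ψ (fun j => y (σ (i.succAbove j))) (y (σ i)) = _
  have : (fun j => y (σ (i.succAbove j))) = (fun j => y ((σ i).succAbove j)) ∘ τ := by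
    funext j; simp [congrFun hτ j]
  rw [this, hsym]
  rfl

lemma Ncount_comp_perm {n : ℕ} (Ψ : (Fin n → 𝒴) → 𝒴 → ℝ)
    (hsym : ∀ σ : Equiv.Perm (Fin n), ∀ v y, Ψ (v ∘ σ) y = Ψ v y)
    (σ : Equiv.Perm (Fin (n+1))) (i : Fin (n+1)) (y : Fin (n+1) → 𝒴) :
    Ncount n Ψ i (y ∘ σ) = Ncount n Ψ (σ i) y := by
  unfold Ncount
  simp only [Tsc_comp_perm Ψ hsym σ]
  have : (Finset.univ.filter fun j => Tsc n Ψ (σ i) y ≤ Tsc n Ψ (σ j) y)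
      = Finset.map σ.symm.toEmbedding
          (Finset.univ.filter fun j => Tsc n Ψ (σ i) y ≤ Tsc n Ψ j y) := by
    ext a
    simp [Finset.mem_map_equiv]
  rw [this, Finset.card_map]

lemma card_Ncount_le {n : ℕ} (Ψ : (Fin n → 𝒴) → 𝒴 → ℝ) (y : Fin (n+1) → 𝒴) (m : ℕ) :
    (Finset.univ.filter fun i : Fin (n+1) => Ncount n Ψ i y ≤ m).card ≤ m := by
  set S := Finset.univ.filter fun i : Fin (n+1) => Ncount n Ψ i y ≤ m with hS
  rcases S.eq_empty_or_nonempty with h | h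
  · simp [h]
  · obtain ⟨i₀, hi₀, hmin⟩ := S.exists_min_image (fun i => Tsc n Ψ i y) h
    have hsub : S ⊆ Finset.univ.filter fun j => Tsc n Ψ i₀ y ≤ Tsc n Ψ j y := by
      intro i hi
      simp only [Finset.mem_filter, Finset.mem_univ, true_and]
      exact hmin i hi
    calc S.card ≤ Ncount n Ψ i₀ y := Finset.card_le_card hsub
      _ ≤ m := by simpa [hS, Finset.mem_filter] using hi₀

lemma measurable_Tsc {n : ℕ} (Ψ : (Fin n → 𝒴) → 𝒴 → ℝ)
    (hΨ : Measurable fun p : (Fin n → 𝒴) × 𝒴 => Ψ p.1 p.2) (i : Fin (n+1)) :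
    Measurable (Tsc n Ψ i) := by
  have : Measurable fun y : Fin (n+1) → 𝒴 =>
      ((fun j => y (i.succAbove j), y i) : (Fin n → 𝒴) × 𝒴) :=
    Measurable.prod (measurable_pi_lambda _ fun j => measurable_pi_apply _)
      (measurable_pi_apply i)
  exact hΨ.comp this

lemma measurable_Ncount {n : ℕ} (Ψ : (Fin n → 𝒴) → 𝒴 → ℝ)
    (hΨ : Measurable fun p : (Fin n → 𝒴) × 𝒴 => Ψ p.1 p.2) (i : Fin (n+1)) :
    Measurable (Ncount n Ψ i) := by
  have : Ncount n Ψ i = fun y =>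
      ∑ j : Fin (n+1), if Tsc n Ψ i y ≤ Tsc n Ψ j y then 1 else 0 := by
    funext y; rw [Ncount, Finset.card_filter]
  rw [this]
  exact Finset.measurable_sum _ fun j _ =>
    Measurable.ite (measurableSet_le (measurable_Tsc Ψ hΨ i) (measurable_Tsc Ψ hΨ j))
      measurable_const measurable_const

lemma measurableSet_Ncount_le {n : ℕ} (Ψ : (Fin n → 𝒴) → 𝒴 → ℝ)
    (hΨ : Measurable fun p : (Fin n → 𝒴) × 𝒴 => Ψ p.1 p.2) (i : Fin (n+1)) (m : ℕ) :
    MeasurableSet {y : Fin (n+1) → 𝒴 | Ncount n Ψ i y ≤ m} :=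
  measurable_Ncount Ψ hΨ i (by trivial : MeasurableSet {k : ℕ | k ≤ m})

lemma measure_Ncount_last_le {Ω : Type*} [MeasurableSpace Ω]
    (Pr : Measure Ω) [IsProbabilityMeasure Pr] (n : ℕ)
    (Y : Fin (n+1) → Ω → 𝒴) (hY : ∀ i, Measurable (Y i))
    (hexch : ∀ σ : Equiv.Perm (Fin (n+1)),
      Measure.map (fun ω => fun i => Y (σ i) ω) Pr
        = Measure.map (fun ω => fun i => Y i ω) Pr)
    (Ψ : (Fin n → 𝒴) → 𝒴 → ℝ)
    (hΨ : Measurable fun p : (Fin n → 𝒴) × 𝒴 => Ψ p.1 p.2)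
    (hsym : ∀ σ : Equiv.Perm (Fin n), ∀ v y, Ψ (v ∘ σ) y = Ψ v y) (m : ℕ) :
    (Measure.map (fun ω => fun i => Y i ω) Pr)
      {y | Ncount n Ψ (Fin.last n) y ≤ m} ≤ (m : ENNReal) / ((n : ENNReal) + 1) := by
  set f : Ω → Fin (n+1) → 𝒴 := fun ω i => Y i ω with hf_def
  have hf : Measurable f := measurable_pi_lambda _ fun i => hY i
  set μ := Measure.map f Pr with hμ_def
  have hμprob : IsProbabilityMeasure μ := Measure.isProbabilityMeasure_map hf.aemeasurable
  set B : Fin (n+1) → Set (Fin (n+1) → 𝒴) :=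
    fun i => {y | Ncount n Ψ i y ≤ m} with hB_def
  have hB : ∀ i, MeasurableSet (B i) := fun i => measurableSet_Ncount_le Ψ hΨ i m
  -- each B i has same measure as B last
  have hEq : ∀ i, μ (B i) = μ (B (Fin.last n)) := by
    intro i
    set σ := Equiv.swap i (Fin.last n) with hσ
    have hg : Measurable fun y : Fin (n+1) → 𝒴 => y ∘ σ :=
      measurable_pi_lambda _ fun j => measurable_pi_apply _
    have hμσ : μ.map (fun y => y ∘ σ) = μ := by
      rw [hμ_def, Measure.map_map hg hf]
      have : (fun y : Fin (n+1) → 𝒴 => y ∘ σ) ∘ f = fun ω => fun j => Y (σ j) ω := rfl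
      rw [this]; exact hexch σ
    have : μ (B (Fin.last n)) = μ ((fun y => y ∘ σ) ⁻¹' (B (Fin.last n))) := by
      conv_lhs => rw [← hμσ]
      exact Measure.map_apply hg (hB _)
    rw [this]
    congr 1
    ext y
    simp only [Set.mem_preimage, hB_def, Set.mem_setOf_eq,
      Ncount_comp_perm Ψ hsym σ, hσ, Ncount_comp_perm Ψ hsym (Equiv.swap i (Fin.last n)),
      Equiv.swap_apply_right]
  -- sum of measures bounded by m
  have hsum : ∑ i : Fin (n+1), μ (B i) ≤ (m : ENNReal) := by
    have h1 : ∀ i, μ (B i) = ∫⁻ y, (B i).indicator (fun _ => (1:ENNReal)) y ∂μ :=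
      fun i => (lintegral_indicator_one (hB i)).symm
    calc ∑ i : Fin (n+1), μ (B i)
        = ∫⁻ y, ∑ i : Fin (n+1), (B i).indicator (fun _ => (1:ENNReal)) y ∂μ := by
          rw [lintegral_finset_sum]
          · exact Finset.sum_congr rfl fun i _ => h1 i
          · exact fun i _ => (measurable_one).indicator (hB i)
      _ ≤ ∫⁻ _, (m : ENNReal) ∂μ := by
          apply lintegral_mono
          intro y
          show ∑ i : Fin (n+1), (B i).indicator (fun _ => (1:ENNReal)) y ≤ (m : ENNReal)
          have h2 : ∑ i : Fin (n+1), (B i).indicator (fun _ => (1:ENNReal)) y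
              = ((Finset.univ.filter fun i : Fin (n+1) => Ncount n Ψ i y ≤ m).card :
                  ENNReal) := by
            rw [Finset.card_filter, Nat.cast_sum]
            apply Finset.sum_congr rfl
            intro i _
            by_cases h : Ncount n Ψ i y ≤ m <;> simp [Set.indicator_apply, hB_def, h]
          rw [h2]
          exact_mod_cast card_Ncount_le Ψ y m
      _ = (m : ENNReal) := by simp
  -- conclude
  have hconst : ∑ i : Fin (n+1), μ (B i) = ((n : ENNReal) + 1) * μ (B (Fin.last n)) := by
    rw [Finset.sum_congr rfl fun i _ => hEq i, Finset.sum_const, Finset.card_univ,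
      Fintype.card_fin, nsmul_eq_mul]
    push_cast; ring_nf
  rw [hconst] at hsum
  rw [ENNReal.le_div_iff_mul_le (by simp) (by simp)]
  rw [mul_comm]
  exact hsum

lemma conformalContour_eq_Ncount {n : ℕ} (Ψ : (Fin n → 𝒴) → 𝒴 → ℝ)
    (yn : Fin n → 𝒴) (yt : 𝒴) :
    conformalContour n Ψ yn yt
      = (Ncount n Ψ (Fin.last n) (Fin.snoc yn yt) : ℝ) / ((n:ℝ)+1) := rfl

lemma conformalContour_le_one {n : ℕ} (Ψ : (Fin n → 𝒴) → 𝒴 → ℝ)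
    (yn : Fin n → 𝒴) (yt : 𝒴) : conformalContour n Ψ yn yt ≤ 1 := by
  rw [conformalContour_eq_Ncount]
  rw [div_le_one (by positivity)]
  have : Ncount n Ψ (Fin.last n) (Fin.snoc yn yt) ≤ n + 1 := by
    unfold Ncount
    calc _ ≤ (Finset.univ : Finset (Fin (n+1))).card := Finset.card_filter_le _ _
      _ = n + 1 := by simp
  exact_mod_cast this


end Aux

/-- **Theorem 2 (strong validity of the nonparametric IM / conformal-plus-consonance
predictor).** For an exchangeable vector `(Y₁,…,Y_{n+1})` and a symmetric non-conformity
measure `Ψ`, the consonant upper predictive probability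
`Π̄_{yⁿ}(A) = sup_{yt ∈ A} π(yt; yⁿ)` built from the conformal plausibility contour is
strongly valid: for every `A ⊆ 𝒴` and `α ∈ [0,1]`, the event
`{Π̄_{Yⁿ}(A) ≤ k_n(α), Y_{n+1} ∈ A}` is contained in `{π(Y_{n+1}; Yⁿ) ≤ k_n(α)}` and its
outer probability is at most `α`, where `k_n(α) = ⌊(n+1)α⌋/(n+1)`. -/
theorem stmt11
    {Ω 𝒴 : Type*} [MeasurableSpace Ω] [MeasurableSpace 𝒴]
    (Pr : Measure Ω) [IsProbabilityMeasure Pr] (n : ℕ)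
    (Y : Fin (n+1) → Ω → 𝒴) (hY : ∀ i, Measurable (Y i))
    (hexch : ∀ σ : Equiv.Perm (Fin (n+1)),
      Measure.map (fun ω => fun i => Y (σ i) ω) Pr
        = Measure.map (fun ω => fun i => Y i ω) Pr)
    (Ψ : (Fin n → 𝒴) → 𝒴 → ℝ)
    (hΨ : Measurable fun p : (Fin n → 𝒴) × 𝒴 => Ψ p.1 p.2)
    (hsym : ∀ σ : Equiv.Perm (Fin n), ∀ v y, Ψ (v ∘ σ) y = Ψ v y) :
    ∀ A : Set 𝒴, ∀ α ∈ Set.Icc (0:ℝ) 1,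
      ({ω | (⨆ yt : A, conformalContour n Ψ (fun j => Y j.castSucc ω) (yt : 𝒴))
              ≤ (⌊((n:ℝ)+1)*α⌋ : ℝ)/((n:ℝ)+1) ∧ Y (Fin.last n) ω ∈ A}
          ⊆ {ω | conformalContour n Ψ (fun j => Y j.castSucc ω) (Y (Fin.last n) ω)
              ≤ (⌊((n:ℝ)+1)*α⌋ : ℝ)/((n:ℝ)+1)}) ∧
      Pr {ω | (⨆ yt : A, conformalContour n Ψ (fun j => Y j.castSucc ω) (yt : 𝒴))
              ≤ (⌊((n:ℝ)+1)*α⌋ : ℝ)/((n:ℝ)+1) ∧ Y (Fin.last n) ω ∈ A}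
        ≤ ENNReal.ofReal α := by
  intro A α hα
  obtain ⟨hα0, hα1⟩ := hα
  -- subset part
  have hsubset : {ω | (⨆ yt : A, conformalContour n Ψ (fun j => Y j.castSucc ω) (yt : 𝒴))
              ≤ (⌊((n:ℝ)+1)*α⌋ : ℝ)/((n:ℝ)+1) ∧ Y (Fin.last n) ω ∈ A}
          ⊆ {ω | conformalContour n Ψ (fun j => Y j.castSucc ω) (Y (Fin.last n) ω)
              ≤ (⌊((n:ℝ)+1)*α⌋ : ℝ)/((n:ℝ)+1)} := by
    intro ω ⟨hsup, hmem⟩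
    have hbdd : BddAbove (Set.range fun yt : A =>
        conformalContour n Ψ (fun j => Y j.castSucc ω) (yt : 𝒴)) :=
      ⟨1, by rintro x ⟨yt, rfl⟩; exact conformalContour_le_one Ψ _ _⟩
    have := le_ciSup hbdd (⟨Y (Fin.last n) ω, hmem⟩ : A)
    exact this.trans hsup
  refine ⟨hsubset, ?_⟩
  -- measure part
  set m : ℕ := (⌊((n:ℝ)+1)*α⌋).toNat with hm_def
  have hfloor_nonneg : (0:ℤ) ≤ ⌊((n:ℝ)+1)*α⌋ :=
    Int.floor_nonneg.mpr (by positivity)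
  have hf : Measurable (fun ω => fun i => Y i ω : Ω → Fin (n+1) → 𝒴) :=
    measurable_pi_lambda _ fun i => hY i
  have hBmeas := measurableSet_Ncount_le Ψ hΨ (Fin.last n) m
  have hsnoc : ∀ ω, (Fin.snoc (fun j : Fin n => Y (Fin.castSucc j) ω)
      (Y (Fin.last n) ω) : Fin (n+1) → 𝒴) = fun i => Y i ω := by
    intro ω; funext i
    refine Fin.lastCases ?_ ?_ i
    · simp
    · intro j; simp
  have hset : {ω | conformalContour n Ψ (fun j => Y j.castSucc ω) (Y (Fin.last n) ω)
              ≤ (⌊((n:ℝ)+1)*α⌋ : ℝ)/((n:ℝ)+1)}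
      = (fun ω => fun i => Y i ω) ⁻¹' {y | Ncount n Ψ (Fin.last n) y ≤ m} := by
    ext ω
    simp only [Set.mem_setOf_eq, Set.mem_preimage, conformalContour_eq_Ncount, hsnoc ω]
    rw [div_le_div_iff_of_pos_right (by positivity)]
    constructor
    · intro h
      have : ((Ncount n Ψ (Fin.last n) fun i => Y i ω) : ℤ) ≤ ⌊((n:ℝ)+1)*α⌋ := by
        exact_mod_cast h
      exact Int.le_toNat hfloor_nonneg |>.mpr this
    · intro h
      have : ((Ncount n Ψ (Fin.last n) fun i => Y i ω) : ℤ) ≤ ⌊((n:ℝ)+1)*α⌋ :=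
        (Int.le_toNat hfloor_nonneg).mp h
      exact_mod_cast this
  calc Pr {ω | (⨆ yt : A, conformalContour n Ψ (fun j => Y j.castSucc ω) (yt : 𝒴))
              ≤ (⌊((n:ℝ)+1)*α⌋ : ℝ)/((n:ℝ)+1) ∧ Y (Fin.last n) ω ∈ A}
      ≤ Pr {ω | conformalContour n Ψ (fun j => Y j.castSucc ω) (Y (Fin.last n) ω)
              ≤ (⌊((n:ℝ)+1)*α⌋ : ℝ)/((n:ℝ)+1)} := measure_mono hsubset
    _ = (Measure.map (fun ω => fun i => Y i ω) Pr)
          {y | Ncount n Ψ (Fin.last n) y ≤ m} := by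
        rw [hset, ← Measure.map_apply hf hBmeas]
    _ ≤ (m : ENNReal) / ((n : ENNReal) + 1) :=
        measure_Ncount_last_le Pr n Y hY hexch Ψ hΨ hsym m
    _ ≤ ENNReal.ofReal α := by
        rw [ENNReal.div_le_iff_le_mul (by simp) (by simp)]
        have hmle : (m : ℝ) ≤ ((n:ℝ)+1) * α := by
          have h1 : ((m:ℤ) : ℝ) ≤ ((n:ℝ)+1)*α := by
            rw [hm_def, Int.toNat_of_nonneg hfloor_nonneg]
            exact Int.floor_le _
          exact_mod_cast h1
        calc (m : ENNReal) = ENNReal.ofReal (m : ℝ) := by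
              rw [ENNReal.ofReal_natCast]
          _ ≤ ENNReal.ofReal (((n:ℝ)+1) * α) := ENNReal.ofReal_le_ofReal hmle
          _ = ENNReal.ofReal α * ENNReal.ofReal ((n:ℝ)+1) := by
              rw [mul_comm, ENNReal.ofReal_mul hα0]
          _ = ENNReal.ofReal α * ((n : ENNReal) + 1) := by
              congr 1
              rw [show ((n:ℝ)+1) = ((n+1 : ℕ):ℝ) by push_cast; ring,
                ENNReal.ofReal_natCast]
              push_cast; ring
end

section
/- Under the setting of conformal prediction—(Y₁, …, Y_{n+1}) exchangeable in 𝒴^{n+1}, Ψ a measurable symmetric non-conformity measure, and π(ỹ; yⁿ) the conformal plausibility contour—the conformal prediction region 𝒫_α(yⁿ) = { ỹ ∈ 𝒴 : π(ỹ; yⁿ) > k_n(α) } has guaranteed coverage: ℙ( Y_{n+1} ∈ 𝒫_α(Yⁿ) ) ≥ 1 − α for every α ∈ [0,1] and every exchangeable law. (Weak prediction validity of conformal prediction regions.) -/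
open MeasureTheory ENNReal

section Aux

variable {𝒴 : Type*} {n : ℕ}

/-- The nonconformity score of coordinate `i` in a full vector `y`. -/
noncomputable def Tstat (Ψ : (Fin n → 𝒴) → 𝒴 → ℝ) (y : Fin (n+1) → 𝒴) (i : Fin (n+1)) : ℝ :=
  Ψ (fun j => y (i.succAbove j)) (y i)

/-- Number of coordinates whose score is at least that of coordinate `k`. -/
noncomputable def rankCount (Ψ : (Fin n → 𝒴) → 𝒴 → ℝ) (y : Fin (n+1) → 𝒴) (k : Fin (n+1)) : ℕ :=
  (Finset.univ.filter fun i => Tstat Ψ y k ≤ Tstat Ψ y i).card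

lemma succAbove_perm (σ : Equiv.Perm (Fin (n+1))) (k : Fin (n+1)) :
    ∃ τ : Equiv.Perm (Fin n), ∀ j, (σ k).succAbove (τ j) = σ (k.succAbove j) := by
  have h : ∀ j : Fin n, ∃ c, (σ k).succAbove c = σ (k.succAbove j) := by
    intro j
    apply Fin.exists_succAbove_eq
    intro h
    exact (Fin.succAbove_ne k j) (σ.injective h)
  choose t ht using h
  have hinj : Function.Injective t := by
    intro a b hab
    have h2 : σ (k.succAbove a) = σ (k.succAbove b) := by rw [← ht a, ← ht b, hab]
    exact Fin.succAbove_right_injective (σ.injective h2)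
  exact ⟨Equiv.ofBijective t (Finite.injective_iff_bijective.mp hinj), fun j => ht j⟩

variable {Ψ : (Fin n → 𝒴) → 𝒴 → ℝ}
variable (hsym : ∀ σ : Equiv.Perm (Fin n), ∀ v y, Ψ (v ∘ σ) y = Ψ v y)

include hsym in
lemma Tstat_comp (σ : Equiv.Perm (Fin (n+1))) (y : Fin (n+1) → 𝒴) (i : Fin (n+1)) :
    Tstat Ψ (y ∘ σ) i = Tstat Ψ y (σ i) := by
  obtain ⟨τ, hτ⟩ := succAbove_perm σ i
  unfold Tstat
  have : (fun j => (y ∘ σ) (i.succAbove j)) = (fun j => y ((σ i).succAbove j)) ∘ τ := by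
    funext j; simp [← hτ j]
  rw [this, hsym]
  rfl

include hsym in
lemma rankCount_comp (σ : Equiv.Perm (Fin (n+1))) (y : Fin (n+1) → 𝒴) (k : Fin (n+1)) :
    rankCount Ψ (y ∘ σ) k = rankCount Ψ y (σ k) := by
  unfold rankCount
  simp only [Tstat_comp hsym σ y]
  apply Finset.card_bij' (fun i _ => σ i) (fun i _ => σ.symm i) <;> simp

lemma card_small_rank (y : Fin (n+1) → 𝒴) (m : ℕ) :
    (Finset.univ.filter fun k => rankCount Ψ y k ≤ m).card ≤ m := by
  set S := Finset.univ.filter fun k => rankCount Ψ y k ≤ m with hS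
  rcases S.eq_empty_or_nonempty with h | h
  · simp [h]
  · obtain ⟨k0, hk0, hmin⟩ := S.exists_min_image (Tstat Ψ y) h
    have hsub : S ⊆ Finset.univ.filter fun i => Tstat Ψ y k0 ≤ Tstat Ψ y i := by
      intro k hk
      simp only [Finset.mem_filter, Finset.mem_univ, true_and]
      exact hmin k hk
    calc S.card ≤ rankCount Ψ y k0 := Finset.card_le_card hsub
      _ ≤ m := (Finset.mem_filter.mp hk0).2

variable [MeasurableSpace 𝒴] (hΨ : Measurable fun p : (Fin n → 𝒴) × 𝒴 => Ψ p.1 p.2)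

include hΨ in
lemma measurable_Tstat (i : Fin (n+1)) : Measurable fun y : Fin (n+1) → 𝒴 => Tstat Ψ y i := by
  exact Measurable.comp (f := fun y : Fin (n+1) → 𝒴 => ((fun j => y (i.succAbove j)), y i)) hΨ
    ((measurable_pi_lambda _ fun j => measurable_pi_apply _).prodMk (measurable_pi_apply i))

include hΨ in
lemma measurable_rankCount (k : Fin (n+1)) :
    Measurable fun y : Fin (n+1) → 𝒴 => rankCount Ψ y k := by
  have : (fun y : Fin (n+1) → 𝒴 => rankCount Ψ y k)
      = fun y => ∑ i : Fin (n+1), if Tstat Ψ y k ≤ Tstat Ψ y i then 1 else 0 := by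
    funext y; exact Finset.card_filter _ _
  rw [this]
  exact Finset.measurable_sum _ fun i _ =>
    Measurable.ite (measurableSet_le (measurable_Tstat hΨ k) (measurable_Tstat hΨ i))
      measurable_const measurable_const

include hΨ in
lemma measurableSet_rank_le (k : Fin (n+1)) (m : ℕ) :
    MeasurableSet {y : Fin (n+1) → 𝒴 | rankCount Ψ y k ≤ m} :=
  measurable_rankCount hΨ k (by trivial : MeasurableSet (Set.Iic m))

end Aux

/-- **Weak prediction validity of conformal prediction regions.** For an exchangeable
vector `(Y₁,…,Y_{n+1})` and a symmetric non-conformity measure `Ψ`, the conformal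
prediction region `𝒫_α(yⁿ) = {yt : π(yt; yⁿ) > k_n(α)}`, with
`k_n(α) = ⌊(n+1)α⌋/(n+1)`, has coverage `P(Y_{n+1} ∈ 𝒫_α(Yⁿ)) ≥ 1 - α` for every
`α ∈ [0,1]`. -/
theorem stmt12
    {Ω 𝒴 : Type*} [MeasurableSpace Ω] [MeasurableSpace 𝒴]
    (Pr : Measure Ω) [IsProbabilityMeasure Pr] (n : ℕ)
    (Y : Fin (n+1) → Ω → 𝒴) (hY : ∀ i, Measurable (Y i))
    (hexch : ∀ σ : Equiv.Perm (Fin (n+1)),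
      Measure.map (fun ω => fun i => Y (σ i) ω) Pr
        = Measure.map (fun ω => fun i => Y i ω) Pr)
    (Ψ : (Fin n → 𝒴) → 𝒴 → ℝ)
    (hΨ : Measurable fun p : (Fin n → 𝒴) × 𝒴 => Ψ p.1 p.2)
    (hsym : ∀ σ : Equiv.Perm (Fin n), ∀ v y, Ψ (v ∘ σ) y = Ψ v y) :
    ∀ α ∈ Set.Icc (0:ℝ) 1,
      1 - ENNReal.ofReal α ≤
        Pr {ω | Y (Fin.last n) ω ∈
          {yt : 𝒴 | conformalContour n Ψ (fun j => Y j.castSucc ω) yt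
            > (⌊((n:ℝ)+1)*α⌋ : ℝ)/((n:ℝ)+1)}} := by
  intro α hα
  obtain ⟨hα0, hα1⟩ := hα
  set m : ℕ := (⌊((n:ℝ)+1)*α⌋).toNat with hmdef
  have hfloor_nonneg : (0:ℤ) ≤ ⌊((n:ℝ)+1)*α⌋ := Int.floor_nonneg.mpr (by positivity)
  have hm : ((⌊((n:ℝ)+1)*α⌋ : ℤ) : ℝ) = (m : ℝ) := by
    rw [hmdef]; exact_mod_cast (Int.toNat_of_nonneg hfloor_nonneg).symm
  set f : Ω → (Fin (n+1) → 𝒴) := fun ω i => Y i ω with hfdef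
  have hf : Measurable f := measurable_pi_lambda _ fun i => hY i
  set μ : Measure (Fin (n+1) → 𝒴) := Pr.map f with hμdef
  have hμprob : IsProbabilityMeasure μ := Measure.isProbabilityMeasure_map hf.aemeasurable
  have hgmeas : ∀ σ : Equiv.Perm (Fin (n+1)),
      Measurable (fun y : Fin (n+1) → 𝒴 => y ∘ σ) :=
    fun σ => measurable_pi_lambda _ fun i => measurable_pi_apply _
  have hperm : ∀ σ : Equiv.Perm (Fin (n+1)), μ.map (fun y => y ∘ σ) = μ := by
    intro σ
    rw [hμdef, Measure.map_map (hgmeas σ) hf]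
    have h1 : (fun y : Fin (n+1) → 𝒴 => y ∘ σ) ∘ f = fun ω => fun i => Y (σ i) ω := rfl
    rw [h1, hexch σ]
  set A : Fin (n+1) → Set (Fin (n+1) → 𝒴) := fun k => {y | rankCount Ψ y k ≤ m} with hAdef
  have hA : ∀ k, MeasurableSet (A k) := fun k => measurableSet_rank_le hΨ k m
  have hμA : ∀ k, μ (A k) = μ (A (Fin.last n)) := by
    intro k
    set σ := Equiv.swap (Fin.last n) k with hσdef
    have h1 : (fun y : Fin (n+1) → 𝒴 => y ∘ σ) ⁻¹' (A (Fin.last n)) = A k := by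
      ext y
      simp only [Set.mem_preimage, hAdef, Set.mem_setOf_eq]
      rw [rankCount_comp hsym σ y (Fin.last n), hσdef, Equiv.swap_apply_left]
    calc μ (A k) = μ ((fun y : Fin (n+1) → 𝒴 => y ∘ σ) ⁻¹' (A (Fin.last n))) := by rw [h1]
      _ = (μ.map (fun y : Fin (n+1) → 𝒴 => y ∘ σ)) (A (Fin.last n)) :=
          (Measure.map_apply (hgmeas σ) (hA _)).symm
      _ = μ (A (Fin.last n)) := by rw [hperm σ]
  have hpt : ∀ y : Fin (n+1) → 𝒴,
      ∑ k : Fin (n+1), (A k).indicator (1 : (Fin (n+1) → 𝒴) → ℝ≥0∞) y ≤ (m : ℝ≥0∞) := by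
    intro y
    have h1 : ∑ k : Fin (n+1), (A k).indicator (1 : (Fin (n+1) → 𝒴) → ℝ≥0∞) y
        = ((Finset.univ.filter fun k : Fin (n+1) => rankCount Ψ y k ≤ m).card : ℝ≥0∞) := by
      rw [Finset.card_filter, Nat.cast_sum]
      refine Finset.sum_congr rfl fun k _ => ?_
      simp only [Set.indicator_apply, hAdef, Set.mem_setOf_eq]
      split_ifs <;> simp
    rw [h1]
    exact_mod_cast Nat.cast_le.mpr (card_small_rank y m)
  have hsum : ∑ k : Fin (n+1), μ (A k) ≤ (m : ℝ≥0∞) := by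
    calc ∑ k : Fin (n+1), μ (A k)
        = ∑ k : Fin (n+1), ∫⁻ y, (A k).indicator 1 y ∂μ := by
          refine Finset.sum_congr rfl fun k _ => ?_
          rw [lintegral_indicator_one (hA k)]
      _ = ∫⁻ y, ∑ k : Fin (n+1), (A k).indicator 1 y ∂μ :=
          (lintegral_finset_sum _ fun k _ => (measurable_one.indicator (hA k))).symm
      _ ≤ ∫⁻ _, (m : ℝ≥0∞) ∂μ := lintegral_mono fun y => hpt y
      _ = (m : ℝ≥0∞) := by simp
  have hlast : ((n : ℝ≥0∞) + 1) * μ (A (Fin.last n)) ≤ (m : ℝ≥0∞) := by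
    have h2 : ∑ k : Fin (n+1), μ (A k) = ((n : ℝ≥0∞) + 1) * μ (A (Fin.last n)) := by
      rw [Finset.sum_congr rfl fun k _ => hμA k, Finset.sum_const, Finset.card_univ,
        Fintype.card_fin, nsmul_eq_mul]
      push_cast
      ring
    rw [← h2]; exact hsum
  have hμlast : μ (A (Fin.last n)) ≤ ENNReal.ofReal α := by
    have hmle : (m : ℝ) ≤ ((n:ℝ)+1)*α := hm ▸ Int.floor_le _
    have h2 : (m : ℝ≥0∞) ≤ ((n : ℝ≥0∞) + 1) * ENNReal.ofReal α := by
      calc (m : ℝ≥0∞) = ENNReal.ofReal (m : ℝ) := by simp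
        _ ≤ ENNReal.ofReal (((n:ℝ)+1)*α) := ENNReal.ofReal_le_ofReal hmle
        _ = ENNReal.ofReal ((n:ℝ)+1) * ENNReal.ofReal α := ENNReal.ofReal_mul (by positivity)
        _ = ((n : ℝ≥0∞) + 1) * ENNReal.ofReal α := by
            rw [show ((n:ℝ)+1) = ((n+1 : ℕ) : ℝ) by push_cast; ring, ENNReal.ofReal_natCast]
            push_cast
            ring_nf
    have h3 : ((n : ℝ≥0∞) + 1) * μ (A (Fin.last n)) ≤ ((n : ℝ≥0∞) + 1) * ENNReal.ofReal α :=
      hlast.trans h2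
    exact (ENNReal.mul_le_mul_iff_right (by simp) (by simp)).mp h3
  have hset : {ω | Y (Fin.last n) ω ∈
        {yt : 𝒴 | conformalContour n Ψ (fun j => Y j.castSucc ω) yt
          > (⌊((n:ℝ)+1)*α⌋ : ℝ)/((n:ℝ)+1)}} = (f ⁻¹' (A (Fin.last n)))ᶜ := by
    ext ω
    simp only [Set.mem_setOf_eq, Set.mem_compl_iff, Set.mem_preimage, hAdef]
    have hy' : (Fin.snoc (fun j => Y j.castSucc ω) (Y (Fin.last n) ω) : Fin (n+1) → 𝒴) = f ω := by
      funext i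
      refine Fin.lastCases ?_ ?_ i
      · simp [hfdef]
      · intro j; simp [hfdef]
    have hcontour : conformalContour n Ψ (fun j => Y j.castSucc ω) (Y (Fin.last n) ω)
        = (rankCount Ψ (f ω) (Fin.last n) : ℝ) / ((n:ℝ)+1) := by
      simp only [conformalContour, hy', rankCount, Tstat]
      rfl
    rw [hcontour, hm, gt_iff_lt, div_lt_div_iff_of_pos_right (by positivity), Nat.cast_lt]
    exact ⟨fun h => not_le.mpr h, fun h => not_le.mp h⟩
  rw [hset, prob_compl_eq_one_sub (hf (hA _)), ← Measure.map_apply hf (hA _), ← hμdef]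
  exact tsub_le_tsub_left hμlast 1
end

section
/- Let 𝒴 be a measurable space, n ∈ ℕ, (Y₁, …, Y_{n+1}) an exchangeable random vector in 𝒴^{n+1}, Ψ a measurable non-conformity measure invariant under permutations of its first argument, and T_i = Ψ((Y_j)_{j≠i}, Y_i). Let W ~ Unif(0,1) be independent of (Y₁, …, Y_{n+1}), and define the smoothed (randomized) conformal p-value at the truth: π^W = (n+1)^{-1} [ #{ i : T_i > T_{n+1} } + W · #{ i : T_i = T_{n+1} } ]. Then π^W is exactly uniformly distributed on [0,1]: ℙ( π^W ≤ α ) = α for every α ∈ [0,1]. (Exact calibration of the smoothed/randomized conformal transducer, Equation (randval).) -/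
open MeasureTheory ProbabilityTheory

lemma aux_point (β G E : ℝ) (hβ : 0 ≤ β) (hG : 0 ≤ G) (hE : 1 ≤ E) :
    E * min 1 (max 0 ((β - G) / E)) = min β (G + E) - min β G := by
  have hE0 : (0:ℝ) < E := lt_of_lt_of_le one_pos hE
  rcases le_or_gt β G with h | h
  · have hx : (β - G)/E ≤ 0 := div_nonpos_of_nonpos_of_nonneg (by linarith) hE0.le
    rw [max_eq_left hx, min_eq_right (zero_le_one' ℝ), mul_zero,
      min_eq_left h, min_eq_left (le_trans h (by linarith))]
    ring
  · rcases le_or_gt β (G + E) with h2 | h2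
    · have h1 : (β - G)/E ≤ 1 := (div_le_one hE0).2 (by linarith)
      have h0 : (0:ℝ) ≤ (β - G)/E := div_nonneg (by linarith) hE0.le
      rw [max_eq_right h0, min_eq_right h1, min_eq_left h2, min_eq_right h.le]
      field_simp
    · have h1 : (1:ℝ) ≤ (β - G)/E := (le_div_iff₀ hE0).2 (by linarith)
      rw [max_eq_right (le_trans zero_le_one h1), min_eq_left h1,
        min_eq_right h2.le, min_eq_right (by linarith : G ≤ β)]
      ring

lemma aux_interval (c : ℝ) :
    (volume.restrict (Set.Icc (0:ℝ) 1)) (Set.Iic c)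
      = ENNReal.ofReal (min 1 (max 0 c)) := by
  rw [Measure.restrict_apply measurableSet_Iic]
  have h : Set.Iic c ∩ Set.Icc 0 1 = Set.Icc 0 (min c 1) := by
    ext x
    simp only [Set.mem_inter_iff, Set.mem_Iic, Set.mem_Icc, le_min_iff]
    tauto
  rw [h, Real.volume_Icc]
  rcases le_or_gt 0 c with hc | hc
  · rw [max_eq_right hc, min_comm]; norm_num
  · rw [max_eq_left hc.le]
    have h1 : min c 1 - 0 ≤ 0 := by
      simp [min_le_iff]; left; linarith
    have h2 : min (1:ℝ) 0 = 0 := by norm_num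
    rw [h2, ENNReal.ofReal_zero, ENNReal.ofReal_eq_zero.2 h1]


lemma telescope {ι : Type*} [DecidableEq ι] (β : ℝ) (hβ : 0 ≤ β) (s : Finset ι) :
    ∀ t : ι → ℝ,
      (∑ v ∈ s.image t, (min β ((s.filter fun i => v ≤ t i).card : ℝ)
          - min β ((s.filter fun i => v < t i).card : ℝ))) = min β (s.card : ℝ) := by
  induction s using Finset.strongInduction with
  | _ s ih =>
    intro t
    rcases s.eq_empty_or_nonempty with rfl | hs
    · simp [min_eq_right hβ]
    · have himg : (s.image t).Nonempty := hs.image t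
      set v₀ := (s.image t).min' himg with hv₀
      have hv₀mem : v₀ ∈ s.image t := (s.image t).min'_mem himg
      have hv₀le : ∀ i ∈ s, v₀ ≤ t i := fun i hi =>
        Finset.min'_le _ _ (Finset.mem_image_of_mem t hi)
      set s' := s.filter (fun i => t i ≠ v₀) with hs'
      have hsub : s' ⊂ s := by
        obtain ⟨i₀, hi₀, hti₀⟩ := Finset.mem_image.1 hv₀mem
        refine Finset.filter_ssubset.2 ⟨i₀, hi₀, ?_⟩
        simp [hti₀]
      have himg' : s'.image t = (s.image t).erase v₀ := by
        ext v
        simp only [Finset.mem_image, Finset.mem_erase, hs', Finset.mem_filter]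
        constructor
        · rintro ⟨i, ⟨hi, hne⟩, rfl⟩; exact ⟨hne, ⟨i, hi, rfl⟩⟩
        · rintro ⟨hne, i, hi, rfl⟩; exact ⟨i, ⟨hi, hne⟩, rfl⟩
      have hgt : ∀ v ∈ s'.image t, v₀ < v := by
        intro v hv
        rw [himg'] at hv
        obtain ⟨hne, hv⟩ := Finset.mem_erase.1 hv
        exact lt_of_le_of_ne (Finset.min'_le _ _ hv) (Ne.symm hne)
      have hcle : ∀ v ∈ s'.image t,
          (s.filter fun i => v ≤ t i) = (s'.filter fun i => v ≤ t i) := by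
        intro v hv
        ext i
        simp only [Finset.mem_filter, hs']
        constructor
        · rintro ⟨hi, h⟩
          exact ⟨⟨hi, fun he => absurd (he ▸ h) (not_le.2 (hgt v hv))⟩, h⟩
        · rintro ⟨⟨hi, _⟩, h⟩; exact ⟨hi, h⟩
      have hclt : ∀ v ∈ s'.image t,
          (s.filter fun i => v < t i) = (s'.filter fun i => v < t i) := by
        intro v hv
        ext i
        simp only [Finset.mem_filter, hs']
        constructor
        · rintro ⟨hi, h⟩
          exact ⟨⟨hi, fun he => absurd (he ▸ h) (not_lt.2 (hgt v hv).le)⟩, h⟩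
        · rintro ⟨⟨hi, _⟩, h⟩; exact ⟨hi, h⟩
      have hA : (s.filter fun i => v₀ ≤ t i) = s :=
        Finset.filter_true_of_mem (fun i hi => hv₀le i hi)
      have hB : (s.filter fun i => v₀ < t i) = s' := by
        ext i
        simp only [Finset.mem_filter, hs']
        constructor
        · rintro ⟨hi, hlt⟩; exact ⟨hi, (ne_of_gt hlt)⟩
        · rintro ⟨hi, hne⟩; exact ⟨hi, lt_of_le_of_ne (hv₀le i hi) (Ne.symm hne)⟩
      have hins : s.image t = insert v₀ ((s.image t).erase v₀) :=
        (Finset.insert_erase hv₀mem).symm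
      rw [hins, Finset.sum_insert (Finset.notMem_erase _ _), ← himg',
        Finset.sum_congr rfl (fun v hv => by rw [hcle v hv, hclt v hv]),
        ih s' hsub t, hA, hB]
      ring


lemma key_sum (m : ℕ) (t : Fin m → ℝ) (β : ℝ) (hβ0 : 0 ≤ β) (hβm : β ≤ m) :
    ∑ i : Fin m, min 1 (max 0 ((β - ((Finset.univ.filter fun j => t i < t j).card : ℝ))
        / ((Finset.univ.filter fun j => t j = t i).card : ℝ))) = β := by
  classical
  set G : ℝ → ℝ := fun v => ((Finset.univ.filter fun j => v < t j).card : ℝ) with hG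
  set E : ℝ → ℝ := fun v => ((Finset.univ.filter fun j => t j = v).card : ℝ) with hE
  set f : ℝ → ℝ := fun v => min 1 (max 0 ((β - G v) / E v)) with hf
  have h1 : (∑ i : Fin m, min 1 (max 0 ((β - ((Finset.univ.filter fun j => t i < t j).card : ℝ))
        / ((Finset.univ.filter fun j => t j = t i).card : ℝ)))) = ∑ i : Fin m, f (t i) := rfl
  rw [h1, Finset.sum_comp f t]
  have h2 : ∀ v ∈ Finset.univ.image t,
      ((Finset.univ.filter fun i => t i = v).card) • f v
        = min β (G v + E v) - min β (G v) := by
    intro v hv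
    obtain ⟨i, _, rfl⟩ := Finset.mem_image.1 hv
    have hcard : (1:ℕ) ≤ (Finset.univ.filter fun j => t j = t i).card :=
      Finset.card_pos.2 ⟨i, by simp⟩
    have hEeq : ((Finset.univ.filter fun i' => t i' = t i).card : ℝ) = E (t i) := rfl
    rw [nsmul_eq_mul, hEeq]
    have := aux_point β (G (t i)) (E (t i)) hβ0 (by positivity) (by simp only [hE]; exact_mod_cast hcard)
    rw [this]
  rw [Finset.sum_congr rfl h2]
  have h3 : ∀ v : ℝ, G v + E v = ((Finset.univ.filter fun j : Fin m => v ≤ t j).card : ℝ) := by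
    intro v
    have hdisj : Disjoint (Finset.univ.filter fun j : Fin m => v < t j)
        (Finset.univ.filter fun j => t j = v) := by
      rw [Finset.disjoint_filter]
      intro j _ hlt heq
      exact absurd (heq ▸ hlt) (lt_irrefl v)
    have hunion : (Finset.univ.filter fun j : Fin m => v < t j)
        ∪ (Finset.univ.filter fun j => t j = v)
        = (Finset.univ.filter fun j => v ≤ t j) := by
      rw [← Finset.filter_or]
      apply Finset.filter_congr
      intro j _
      constructor
      · rintro (h | h); exacts [h.le, h.ge]
      · intro h
        rcases lt_or_eq_of_le h with h' | h'
        exacts [Or.inl h', Or.inr h'.symm]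
    simp only [hG, hE]
    rw [← hunion, Finset.card_union_of_disjoint hdisj]
    push_cast
    ring
  have h4 : (∑ v ∈ Finset.univ.image t, (min β (G v + E v) - min β (G v)))
      = min β ((Finset.univ : Finset (Fin m)).card : ℝ) := by
    rw [← telescope β hβ0 Finset.univ t]
    exact Finset.sum_congr rfl fun v _ => by rw [h3 v]
  rw [h4, Finset.card_univ, Fintype.card_fin, min_eq_left hβm]


/-- **Exact calibration of the smoothed/randomized conformal transducer (Equation
(randval)).** For an exchangeable vector `(Y₁,…,Y_{n+1})`, a symmetric non-conformity
measure `Ψ` with `T_i = Ψ((Y_j)_{j≠i}, Y_i)`, and `W ~ Unif(0,1)` independent of the data,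
the smoothed conformal p-value at the truth,
`π^W = (n+1)⁻¹ ( #{i : T_i > T_{n+1}} + W ⋅ #{i : T_i = T_{n+1}} )`,
is exactly `Unif(0,1)`: `P(π^W ≤ α) = α` for every `α ∈ [0,1]`. -/
theorem stmt13
    {Ω 𝒴 : Type*} [MeasurableSpace Ω] [MeasurableSpace 𝒴]
    (Pr : Measure Ω) [IsProbabilityMeasure Pr] (n : ℕ)
    (Y : Fin (n+1) → Ω → 𝒴) (hY : ∀ i, Measurable (Y i))
    (hexch : ∀ σ : Equiv.Perm (Fin (n+1)),
      Measure.map (fun ω => fun i => Y (σ i) ω) Pr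
        = Measure.map (fun ω => fun i => Y i ω) Pr)
    (Ψ : (Fin n → 𝒴) → 𝒴 → ℝ)
    (hΨ : Measurable fun p : (Fin n → 𝒴) × 𝒴 => Ψ p.1 p.2)
    (hsym : ∀ σ : Equiv.Perm (Fin n), ∀ v y, Ψ (v ∘ σ) y = Ψ v y)
    (W : Ω → ℝ) (hW : Measurable W)
    (hWunif : Pr.map W = volume.restrict (Set.Icc (0:ℝ) 1))
    (hindep : IndepFun W (fun ω => fun i => Y i ω) Pr) :
    ∀ α ∈ Set.Icc (0:ℝ) 1,
      Pr {ω |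
        (((Finset.univ.filter fun i : Fin (n+1) =>
              Ψ (fun j => Y ((Fin.last n).succAbove j) ω) (Y (Fin.last n) ω)
                < Ψ (fun j => Y (i.succAbove j) ω) (Y i ω)).card : ℝ)
          + W ω * ((Finset.univ.filter fun i : Fin (n+1) =>
              Ψ (fun j => Y (i.succAbove j) ω) (Y i ω)
                = Ψ (fun j => Y ((Fin.last n).succAbove j) ω) (Y (Fin.last n) ω)).card : ℝ))
          / ((n:ℝ)+1) ≤ α}
        = ENNReal.ofReal α := by
  classical
  intro α hα
  obtain ⟨hα0, hα1⟩ := hα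
  set Yv : Ω → (Fin (n+1) → 𝒴) := fun ω i => Y i ω with hYvdef
  have hYv : Measurable Yv := measurable_pi_lambda _ hY
  set T : (Fin (n+1) → 𝒴) → Fin (n+1) → ℝ :=
    fun y i => Ψ (fun j => y (i.succAbove j)) (y i) with hTdef
  have hT : ∀ i, Measurable fun y => T y i := by
    intro i
    have hpair : Measurable fun y : Fin (n+1) → 𝒴 =>
        ((fun j => y (i.succAbove j), y i) : (Fin n → 𝒴) × 𝒴) :=
      (measurable_pi_lambda _ fun j => measurable_pi_apply _).prodMk (measurable_pi_apply i)
    exact hΨ.comp hpair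
  set G : (Fin (n+1) → 𝒴) → Fin (n+1) → ℝ :=
    fun y i => ((Finset.univ.filter fun j => T y i < T y j).card : ℝ) with hGdef
  set E : (Fin (n+1) → 𝒴) → Fin (n+1) → ℝ :=
    fun y i => ((Finset.univ.filter fun j => T y j = T y i).card : ℝ) with hEdef
  have hGmeas : ∀ i, Measurable fun y => G y i := by
    intro i
    have h : (fun y => G y i)
        = fun y => ∑ j : Fin (n+1), if T y i < T y j then (1:ℝ) else 0 := by
      funext y
      simp only [hGdef, Finset.card_filter]
      push_cast [apply_ite (Nat.cast : ℕ → ℝ)]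
      rfl
    rw [h]
    exact Finset.measurable_sum _ fun j _ =>
      Measurable.ite (measurableSet_lt (hT i) (hT j)) measurable_const measurable_const
  have hEmeas : ∀ i, Measurable fun y => E y i := by
    intro i
    have h : (fun y => E y i)
        = fun y => ∑ j : Fin (n+1), if T y j = T y i then (1:ℝ) else 0 := by
      funext y
      simp only [hEdef, Finset.card_filter]
      push_cast [apply_ite (Nat.cast : ℕ → ℝ)]
      rfl
    rw [h]
    exact Finset.measurable_sum _ fun j _ =>
      Measurable.ite (measurableSet_eq_fun (hT j) (hT i)) measurable_const measurable_const
  have hE1 : ∀ y i, (1:ℝ) ≤ E y i := by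
    intro y i
    have : (1:ℕ) ≤ (Finset.univ.filter fun j => T y j = T y i).card :=
      Finset.card_pos.2 ⟨i, by simp⟩
    simp only [hEdef]
    exact_mod_cast this
  set β := α * ((n:ℝ)+1) with hβdef
  have hβ0 : 0 ≤ β := by positivity
  set S : Fin (n+1) → Set ((Fin (n+1) → 𝒴) × ℝ) :=
    fun i => {p | (G p.1 i + p.2 * E p.1 i) / ((n:ℝ)+1) ≤ α} with hSdef
  have hSmeas : ∀ i, MeasurableSet (S i) := by
    intro i
    exact measurableSet_le
      ((((hGmeas i).comp measurable_fst).add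
        (measurable_snd.mul ((hEmeas i).comp measurable_fst))).div_const _)
      measurable_const
  have hpairmeas : Measurable fun ω => (Yv ω, W ω) := hYv.prodMk hW
  haveI : IsProbabilityMeasure (Pr.map Yv) := Measure.isProbabilityMeasure_map hYv.aemeasurable
  haveI : IsProbabilityMeasure (Pr.map W) := Measure.isProbabilityMeasure_map hW.aemeasurable
  set μ := (Pr.map Yv).prod (Pr.map W) with hμdef
  have hmap : Pr.map (fun ω => (Yv ω, W ω)) = μ :=
    (indepFun_iff_map_prod_eq_prod_map_map hYv.aemeasurable hW.aemeasurable).1 hindep.symm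
  have hPrA : ∀ i, Pr ((fun ω => (Yv ω, W ω)) ⁻¹' (S i)) = μ (S i) := by
    intro i
    rw [← hmap, Measure.map_apply hpairmeas (hSmeas i)]
  -- permutation covariance of T
  have hTperm : ∀ (σ : Equiv.Perm (Fin (n+1))) (y : Fin (n+1) → 𝒴) (i),
      T (fun k => y (σ k)) i = T y (σ i) := by
    intro σ y i
    set τ : Fin n ≃ Fin n := (finSuccAboveEquiv i).trans
      ((σ.subtypeEquiv (fun x => (not_congr σ.apply_eq_iff_eq).symm)).trans
        (finSuccAboveEquiv (σ i)).symm) with hτdef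
    have hτ : ∀ j, (σ i).succAbove (τ j) = σ (i.succAbove j) := by
      intro j
      have h2 : ((finSuccAboveEquiv (σ i)) (τ j) : Fin (n+1)) = σ (i.succAbove j) := by
        simp only [hτdef, Equiv.trans_apply, Equiv.apply_symm_apply]
        simp [Equiv.subtypeEquiv, finSuccAboveEquiv_apply]
      rw [finSuccAboveEquiv_apply] at h2
      exact h2
    have step : T (fun k => y (σ k)) i
        = Ψ ((fun j => y ((σ i).succAbove j)) ∘ τ) (y (σ i)) := by
      simp only [hTdef]
      congr 1
      funext j
      simp only [Function.comp_apply, hτ j]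
    rw [step, hsym τ]
  have hGperm : ∀ (σ : Equiv.Perm (Fin (n+1))) (y : Fin (n+1) → 𝒴),
      G (fun k => y (σ k)) (Fin.last n) = G y (σ (Fin.last n)) := by
    intro σ y
    simp only [hGdef, hTperm σ y]
    congr 1
    exact Finset.card_equiv σ (fun j => by simp)
  have hEperm : ∀ (σ : Equiv.Perm (Fin (n+1))) (y : Fin (n+1) → 𝒴),
      E (fun k => y (σ k)) (Fin.last n) = E y (σ (Fin.last n)) := by
    intro σ y
    simp only [hEdef, hTperm σ y]
    congr 1
    exact Finset.card_equiv σ (fun j => by simp)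
  -- all S i have the same μ-measure
  have hμswap : ∀ i, μ (S i) = μ (S (Fin.last n)) := by
    intro i
    set σ := Equiv.swap i (Fin.last n) with hσdef
    have hg : Measurable fun (y : Fin (n+1) → 𝒴) => (fun k => y (σ k)) :=
      measurable_pi_lambda _ fun k => measurable_pi_apply _
    have hYσmeas : Measurable fun ω => (fun k => Y (σ k) ω) :=
      measurable_pi_lambda _ fun k => hY _
    have hindσ : IndepFun W (fun ω => (fun k => Y (σ k) ω)) Pr := by
      have := hindep.comp measurable_id hg
      exact this
    have hmapYσ : Pr.map (fun ω => (fun k => Y (σ k) ω)) = Pr.map Yv := hexch σ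
    have hmapσ : Pr.map (fun ω => ((fun k => Y (σ k) ω), W ω)) = μ := by
      rw [(indepFun_iff_map_prod_eq_prod_map_map hYσmeas.aemeasurable
        hW.aemeasurable).1 hindσ.symm, hmapYσ]
    have hpre : (fun ω => ((fun k => Y (σ k) ω), W ω)) ⁻¹' (S (Fin.last n))
        = (fun ω => (Yv ω, W ω)) ⁻¹' (S i) := by
      ext ω
      simp only [Set.mem_preimage, hSdef, Set.mem_setOf_eq]
      have h1 : (fun k => Y (σ k) ω) = (fun k => Yv ω (σ k)) := rfl
      rw [h1, hGperm σ (Yv ω), hEperm σ (Yv ω), hσdef, Equiv.swap_apply_right]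
    calc μ (S i) = Pr ((fun ω => (Yv ω, W ω)) ⁻¹' (S i)) := (hPrA i).symm
      _ = Pr ((fun ω => ((fun k => Y (σ k) ω), W ω)) ⁻¹' (S (Fin.last n))) := by rw [hpre]
      _ = (Pr.map (fun ω => ((fun k => Y (σ k) ω), W ω))) (S (Fin.last n)) := by
          rw [Measure.map_apply (hYσmeas.prodMk hW) (hSmeas (Fin.last n))]
      _ = μ (S (Fin.last n)) := by rw [hmapσ]
  -- total sum of μ (S i)
  have hSi : ∀ i, μ (S i) = ∫⁻ y,
      ENNReal.ofReal (min 1 (max 0 ((β - G y i) / E y i))) ∂(Pr.map Yv) := by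
    intro i
    rw [hμdef, Measure.prod_apply (hSmeas i)]
    congr 1
    funext y
    have hEpos : (0:ℝ) < E y i := lt_of_lt_of_le one_pos (hE1 y i)
    have hslice : (Prod.mk y ⁻¹' S i) = Set.Iic ((β - G y i) / E y i) := by
      ext w
      simp only [hSdef, Set.mem_preimage, Set.mem_setOf_eq, Set.mem_Iic]
      rw [div_le_iff₀ (by positivity : (0:ℝ) < (n:ℝ)+1), le_div_iff₀ hEpos, hβdef]
      constructor <;> intro h <;> linarith
    rw [hslice, hWunif, aux_interval]
  have hintmeas : ∀ i, Measurable fun y =>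
      ENNReal.ofReal (min 1 (max 0 ((β - G y i) / E y i))) := by
    intro i
    exact (measurable_const.min (measurable_const.max
      ((measurable_const.sub (hGmeas i)).div (hEmeas i)))).ennreal_ofReal
  have hsum : ∑ i : Fin (n+1), μ (S i) = ENNReal.ofReal β := by
    rw [Finset.sum_congr rfl (fun i _ => hSi i),
      ← lintegral_finset_sum _ (fun i _ => hintmeas i)]
    have hpt : ∀ y : Fin (n+1) → 𝒴,
        (∑ i : Fin (n+1), ENNReal.ofReal (min 1 (max 0 ((β - G y i) / E y i))))
          = ENNReal.ofReal β := by
      intro y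
      rw [← ENNReal.ofReal_sum_of_nonneg
        (fun i _ => le_min zero_le_one (le_max_left 0 _))]
      congr 1
      have hβm : β ≤ ((n+1 : ℕ) : ℝ) := by
        push_cast
        nlinarith
      exact key_sum (n+1) (T y) β hβ0 hβm
    simp_rw [hpt]
    rw [lintegral_const, measure_univ, mul_one]
  -- conclude
  have hfin : (((n:ℕ)+1 : ℕ) : ENNReal) * μ (S (Fin.last n)) = ENNReal.ofReal β := by
    rw [← hsum, Finset.sum_congr rfl (fun i _ => hμswap i), Finset.sum_const,
      Finset.card_univ, Fintype.card_fin, nsmul_eq_mul]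
  have hofreal : ENNReal.ofReal β = (((n:ℕ)+1 : ℕ) : ENNReal) * ENNReal.ofReal α := by
    rw [hβdef, ENNReal.ofReal_mul hα0, mul_comm]
    congr 1
    rw [← ENNReal.ofReal_natCast]
    congr 1
    push_cast
    ring
  have hcancel : μ (S (Fin.last n)) = ENNReal.ofReal α := by
    have h := hfin.trans hofreal
    exact (ENNReal.mul_right_inj (by simp)
      (ENNReal.natCast_ne_top _)).1 h
  have hset : {ω |
        (((Finset.univ.filter fun i : Fin (n+1) =>
              Ψ (fun j => Y ((Fin.last n).succAbove j) ω) (Y (Fin.last n) ω)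
                < Ψ (fun j => Y (i.succAbove j) ω) (Y i ω)).card : ℝ)
          + W ω * ((Finset.univ.filter fun i : Fin (n+1) =>
              Ψ (fun j => Y (i.succAbove j) ω) (Y i ω)
                = Ψ (fun j => Y ((Fin.last n).succAbove j) ω) (Y (Fin.last n) ω)).card : ℝ))
          / ((n:ℝ)+1) ≤ α}
      = (fun ω => (Yv ω, W ω)) ⁻¹' (S (Fin.last n)) := rfl
  rw [hset, hPrA, hcancel]
end
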